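/- arXiv:1212.3349 — 11 statements merged into one kernel-verified Lean document; each statement's English description precedes it below -/
import Mathlib

section
/- Let T₁ be (S, ε₁)-firmly nonexpansive and T₂ be (S, ε₂)-firmly nonexpansive on D ⊂ E, and let λ ∈ [0,1]. Then the convex combination λT₁ + (1−λ)T₂ is (S, ε)-firmly nonexpansive on D, where ε = max{ε₁, ε₂}. -/
open RealInnerProductSpace Metric

noncomputable section

variable {E : Type*} [NormedAddCommGroup E] [InnerProductSpace ℝ E]

/-- The (possibly multivalued) metric projector onto a set. -/
def projSet (Ω : Set E) (x : E) : Set E :=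
  {y | y ∈ Ω ∧ ‖x - y‖ = Metric.infDist x Ω}

/-- The (possibly multivalued) reflector across a set. -/
def reflSet (Ω : Set E) (x : E) : Set E :=
  {w | ∃ y ∈ projSet Ω x, w = (2 : ℝ) • y - x}

/-- Pointwise composition of the two reflectors. -/
def rARB (A B : Set E) (x : E) : Set E :=
  ⋃ y ∈ reflSet B x, reflSet A y

/-- The (possibly multivalued) Douglas–Rachford operator. -/
def TDR (A B : Set E) (x : E) : Set E :=
  {w | ∃ z ∈ rARB A B x, w = ((1 : ℝ) / 2) • (z + x)}

/-- The proximal normal cone `cone (P_Ω⁻¹ x - x)`. -/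
def pnCone (Ω : Set E) (x : E) : Set E :=
  {v | ∃ t : ℝ, 0 ≤ t ∧ ∃ z : E, x ∈ projSet Ω z ∧ v = t • (z - x)}

lemma sq_norm_combo {E : Type*} [NormedAddCommGroup E] [InnerProductSpace ℝ E]
    (u v : E) (l : ℝ) (h0 : 0 ≤ l) (h1 : l ≤ 1) :
    ‖l • u + (1 - l) • v‖ ^ 2 ≤ l * ‖u‖ ^ 2 + (1 - l) * ‖v‖ ^ 2 := by
  have hu : ‖l • u‖ ^ 2 = l ^ 2 * ‖u‖ ^ 2 := by
    rw [norm_smul]; simp [mul_pow, Real.norm_eq_abs, sq_abs]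
  have hv : ‖(1 - l) • v‖ ^ 2 = (1 - l) ^ 2 * ‖v‖ ^ 2 := by
    rw [norm_smul]; simp [mul_pow, Real.norm_eq_abs, sq_abs]
  have hexp : ‖l • u + (1 - l) • v‖ ^ 2
      = l ^ 2 * ‖u‖ ^ 2 + 2 * (l * (1 - l)) * (inner ℝ u v : ℝ) + (1 - l) ^ 2 * ‖v‖ ^ 2 := by
    rw [norm_add_sq_real, hu, hv, real_inner_smul_left, real_inner_smul_right]; ring
  have hiuv : (inner ℝ u v : ℝ) ≤ ‖u‖ * ‖v‖ := real_inner_le_norm u v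
  nlinarith [sq_nonneg (‖u‖ - ‖v‖), mul_nonneg h0 (sub_nonneg.mpr h1),
    norm_nonneg u, norm_nonneg v]

/-- Convex combinations preserve `(S,ε)`-firm nonexpansiveness. -/
theorem convex_combination_firmly_nonexpansive
    (D S : Set E) (T₁ T₂ : E → Set E) (ε₁ ε₂ : ℝ) (hε₁ : 0 ≤ ε₁) (hε₂ : 0 ≤ ε₂)
    (lam : ℝ) (hlam0 : 0 ≤ lam) (hlam1 : lam ≤ 1)
    (h₁ : ∀ x ∈ D, ∀ xbar ∈ S, ∀ xp ∈ T₁ x, ∀ xbarp ∈ T₁ xbar,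
        ‖xp - xbarp‖ ^ 2 + ‖(x - xp) - (xbar - xbarp)‖ ^ 2 ≤ (1 + ε₁) * ‖x - xbar‖ ^ 2)
    (h₂ : ∀ x ∈ D, ∀ xbar ∈ S, ∀ xp ∈ T₂ x, ∀ xbarp ∈ T₂ xbar,
        ‖xp - xbarp‖ ^ 2 + ‖(x - xp) - (xbar - xbarp)‖ ^ 2 ≤ (1 + ε₂) * ‖x - xbar‖ ^ 2) :
    ∀ x ∈ D, ∀ xbar ∈ S,
      ∀ xp ∈ {w | ∃ a ∈ T₁ x, ∃ b ∈ T₂ x, w = lam • a + (1 - lam) • b},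
      ∀ xbarp ∈ {w | ∃ a ∈ T₁ xbar, ∃ b ∈ T₂ xbar, w = lam • a + (1 - lam) • b},
        ‖xp - xbarp‖ ^ 2 + ‖(x - xp) - (xbar - xbarp)‖ ^ 2
          ≤ (1 + max ε₁ ε₂) * ‖x - xbar‖ ^ 2 := by
  intro x hx xbar hxbar xp hxp xbarp hxbarp
  obtain ⟨a, ha, b, hb, rfl⟩ := hxp
  obtain ⟨abar, habar, bbar, hbbar, rfl⟩ := hxbarp
  have H1 := h₁ x hx xbar hxbar a ha abar habar
  have H2 := h₂ x hx xbar hxbar b hb bbar hbbar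
  have e1 : lam • a + (1 - lam) • b - (lam • abar + (1 - lam) • bbar)
      = lam • (a - abar) + (1 - lam) • (b - bbar) := by
    simp [smul_sub]; abel
  have e2 : (x - (lam • a + (1 - lam) • b)) - (xbar - (lam • abar + (1 - lam) • bbar))
      = lam • ((x - a) - (xbar - abar)) + (1 - lam) • ((x - b) - (xbar - bbar)) := by
    simp [smul_sub, sub_smul]; abel
  rw [e1, e2]
  have c1 := sq_norm_combo (a - abar) (b - bbar) lam hlam0 hlam1
  have c2 := sq_norm_combo ((x - a) - (xbar - abar)) ((x - b) - (xbar - bbar)) lam hlam0 hlam1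
  have m1 : ε₁ ≤ max ε₁ ε₂ := le_max_left _ _
  have m2 : ε₂ ≤ max ε₁ ε₂ := le_max_right _ _
  have hl1 : (0:ℝ) ≤ 1 - lam := by linarith
  nlinarith [mul_le_mul_of_nonneg_left H1 hlam0, mul_le_mul_of_nonneg_left H2 hl1,
    mul_nonneg hlam0 (sq_nonneg ‖x - xbar‖), mul_nonneg hl1 (sq_nonneg ‖x - xbar‖), m1, m2]
end
end

section
/- The set Ω = {(x₁,x₂) ∈ ℝ² : x₂ ≤ −x₁ if x₁ ≤ 0, and x₂ ≤ 0 if x₁ > 0} is not Clarke regular at the origin, but is (√2/2, ∞)-regular at the origin: for all x, x̄ ∈ Ω and every proximal normal v at x, ⟨v, x̄ − x⟩ ≤ (√2/2)‖v‖‖x̄ − x‖. -/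
open RealInnerProductSpace Metric

noncomputable section

variable {E : Type*} [NormedAddCommGroup E] [InnerProductSpace ℝ E]

abbrev E2' := EuclideanSpace ℝ (Fin 2)

def S' : Set E2' := {p | (p 0 ≤ 0 → p 1 ≤ -p 0) ∧ (0 < p 0 → p 1 ≤ 0)}

lemma normsq' (p : E2') : ‖p‖^2 = (p 0)^2 + (p 1)^2 := by
  rw [EuclideanSpace.norm_eq, Real.sq_sqrt (by positivity)]
  simp [Fin.sum_univ_two, sq_abs]

lemma inner2' (p q : E2') : ⟪p, q⟫ = p 0 * q 0 + p 1 * q 1 := by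
  simp [PiLp.inner_apply, RCLike.inner_apply, Fin.sum_univ_two]
  ring

lemma memS' (u v : ℝ) (h1 : u ≤ 0 → v ≤ -u) (h2 : 0 < u → v ≤ 0) :
    (!₂[u, v] : E2') ∈ S' := by
  constructor <;> simpa using ‹_›

lemma nonpos_of_small (c ε : ℝ) (hε : 0 < ε) (h : ∀ t : ℝ, 0 < t → t ≤ ε → c ≤ t) :
    c ≤ 0 := by
  by_contra hc
  push_neg at hc
  have ht : 0 < min (c/2) ε := lt_min (by linarith) hε
  have h1 := h _ ht (min_le_right _ _)
  have h2 := min_le_left (c/2) ε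
  linarith

lemma nonpos_of' (c : ℝ) (h : ∀ t : ℝ, 0 < t → c ≤ t) : c ≤ 0 :=
  nonpos_of_small c 1 one_pos (fun t ht _ => h t ht)

lemma proj_sq' {x z : E2'} (hxz : x ∈ projSet S' z) :
    ∀ y ∈ S', (z 0 - x 0)^2 + (z 1 - x 1)^2 ≤ (z 0 - y 0)^2 + (z 1 - y 1)^2 := by
  intro y hy
  have h1 : ‖z - x‖ ≤ ‖z - y‖ := by
    rw [hxz.2, ← dist_eq_norm]
    exact Metric.infDist_le_dist_of_mem hy
  have h2 : ‖z - x‖^2 ≤ ‖z - y‖^2 := by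
    nlinarith [norm_nonneg (z - x), norm_nonneg (z - y)]
  rw [normsq', normsq'] at h2
  simpa using h2

lemma eq_of_sq_eq {p q : ℝ} (h : p^2 = q^2) (hp : 0 ≤ p) (hq : 0 ≤ q) : p = q := by
  nlinarith


lemma proj_dir {x z : E2'} (hxz : x ∈ projSet S' z) (u v t : ℝ) (ht : 0 < t)
    (hy : (!₂[x 0 + t*u, x 1 + t*v] : E2') ∈ S') :
    (z 0 - x 0)*u + (z 1 - x 1)*v ≤ t*(u^2+v^2)/2 := by
  have h := proj_sq' hxz _ hy
  simp only [PiLp.toLp_apply, Matrix.cons_val_zero, Matrix.cons_val_one, Matrix.head_cons] at h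
  nlinarith [h, ht]

lemma sq_ineq {p q : ℝ} (h : p < -q) (hq : 0 < q) : q^2 ≤ p^2 := by nlinarith

lemma claim_c {d0 d1 n : ℝ} (hn2 : (d0+d1)^2 ≤ n^2) (hn : 0 ≤ n) : d0+d1 ≤ n := by
  rcases le_or_gt (d0+d1) 0 with h | h
  · linarith
  · nlinarith

lemma sq_sum_le {d0 d1 m : ℝ} (h : m = d0^2 + d1^2) (hdd : d0*d1 ≤ 0) :
    (d0+d1)^2 ≤ m := by nlinarith

lemma claim_b {d1 n : ℝ} (hkey : 2*d1^2 ≤ n^2) (hn : 0 ≤ n) :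
    d1 ≤ Real.sqrt 2/2*n := by
  rcases le_or_gt d1 0 with h | h
  · have h2 : 0 ≤ Real.sqrt 2/2*n := by positivity
    linarith
  · have hr2 : Real.sqrt 2 ^ 2 = 2 := Real.sq_sqrt (by norm_num)
    have e1 : d1 ≤ Real.sqrt (n^2/2) := by
      rw [← Real.sqrt_sq h.le]
      exact Real.sqrt_le_sqrt (by linarith)
    have e2 : Real.sqrt (n^2/2) = Real.sqrt 2/2*n := by
      rw [show n^2/2 = (Real.sqrt 2/2*n)^2 by rw [mul_pow, div_pow, hr2]; ring]
      exact Real.sqrt_sq (by positivity)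
    linarith

lemma part2' : ∀ x ∈ S', ∀ xbar ∈ S', ∀ v ∈ pnCone S' x,
    ⟪v, xbar - x⟫ ≤ (Real.sqrt 2 / 2) * ‖v‖ * ‖xbar - x‖ := by
  intro x hx xbar hxbar v hv
  obtain ⟨s, hs, z, hxz, rfl⟩ := hv
  set a := z 0 - x 0 with ha
  set b := z 1 - x 1 with hb
  set d0 := xbar 0 - x 0 with hd0
  set d1 := xbar 1 - x 1 with hd1
  have hinz : ⟪s • (z - x), xbar - x⟫ = s * a * d0 + s * b * d1 := by
    rw [inner2']
    simp [ha, hb, hd0, hd1]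
    try ring
  have hnv : ‖s • (z - x)‖^2 = (s*a)^2 + (s*b)^2 := by
    rw [normsq']
    simp [ha, hb]
    try ring
  have hnd : ‖xbar - x‖^2 = d0^2 + d1^2 := by
    rw [normsq']
    simp [hd0, hd1]
  have hndnn : (0:ℝ) ≤ ‖xbar - x‖ := norm_nonneg _
  have hnvnn : (0:ℝ) ≤ ‖s • (z - x)‖ := norm_nonneg _
  have hr2 : Real.sqrt 2 ^ 2 = 2 := Real.sq_sqrt (by norm_num)
  have hrnn : (0:ℝ) ≤ Real.sqrt 2 := Real.sqrt_nonneg 2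
  have trivzero : a = 0 → b = 0 →
      ⟪s • (z - x), xbar - x⟫ ≤ (Real.sqrt 2 / 2) * ‖s • (z - x)‖ * ‖xbar - x‖ := by
    intro h1 h2
    rw [hinz, h1, h2]
    have h3 : (0:ℝ) ≤ (Real.sqrt 2 / 2) * ‖s • (z - x)‖ * ‖xbar - x‖ := by positivity
    simpa using h3
  by_cases hint : x 1 < 0 ∨ x 0 + x 1 < 0
  · -- interior: z = x
    rcases hint with hneg | hneg
    · have h1 : a ≤ 0 := by
        apply nonpos_of'
        intro t ht
        have hd := proj_dir hxz 1 0 t ht (by apply memS' <;> intro h' <;> linarith)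
        rw [← ha, ← hb] at hd
        linarith [hd]
      have h2 : -a ≤ 0 := by
        apply nonpos_of'
        intro t ht
        have hd := proj_dir hxz (-1) 0 t ht (by apply memS' <;> intro h' <;> linarith)
        rw [← ha, ← hb] at hd
        linarith [hd]
      have h3 : b ≤ 0 := by
        apply nonpos_of_small _ (-(x 1)) (by linarith)
        intro t ht htε
        have hd := proj_dir hxz 0 1 t ht (by apply memS' <;> intro h' <;> linarith)
        rw [← ha, ← hb] at hd
        linarith [hd]
      have h4 : -b ≤ 0 := by
        apply nonpos_of'
        intro t ht
        have hd := proj_dir hxz 0 (-1) t ht (by apply memS' <;> intro h' <;> linarith)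
        rw [← ha, ← hb] at hd
        linarith [hd]
      exact trivzero (by linarith) (by linarith)
    · have h1 : a ≤ 0 := by
        apply nonpos_of_small _ (-(x 0 + x 1)) (by linarith)
        intro t ht htε
        have hd := proj_dir hxz 1 0 t ht (by apply memS' <;> intro h' <;> linarith)
        rw [← ha, ← hb] at hd
        linarith [hd]
      have h2 : -a ≤ 0 := by
        apply nonpos_of'
        intro t ht
        have hd := proj_dir hxz (-1) 0 t ht (by apply memS' <;> intro h' <;> linarith)
        rw [← ha, ← hb] at hd
        linarith [hd]
      have h3 : b ≤ 0 := by
        apply nonpos_of_small _ (-(x 0 + x 1)) (by linarith)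
        intro t ht htε
        have hd := proj_dir hxz 0 1 t ht (by apply memS' <;> intro h' <;> linarith)
        rw [← ha, ← hb] at hd
        linarith [hd]
      have h4 : -b ≤ 0 := by
        apply nonpos_of'
        intro t ht
        have hd := proj_dir hxz 0 (-1) t ht (by apply memS' <;> intro h' <;> linarith)
        rw [← ha, ← hb] at hd
        linarith [hd]
      exact trivzero (by linarith) (by linarith)
  · push_neg at hint
    obtain ⟨hx1, hx01⟩ := hint
    rcases lt_trichotomy (x 0) 0 with hx0 | hx0 | hx0
    · -- case (c): x0 < 0, x1 = -x0
      have hxeq : x 1 = -x 0 := le_antisymm (hx.1 (le_of_lt hx0)) (by linarith)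
      have hab : a = b := by
        have h1 : a - b ≤ 0 := by
          apply nonpos_of'
          intro t ht
          have hd := proj_dir hxz 1 (-1) t ht (by apply memS' <;> intro h' <;> linarith)
          rw [← ha, ← hb] at hd
          linarith [hd]
        have h2 : b - a ≤ 0 := by
          apply nonpos_of'
          intro t ht
          have hd := proj_dir hxz (-1) 1 t ht (by apply memS' <;> intro h' <;> linarith)
          rw [← ha, ← hb] at hd
          linarith [hd]
        linarith
      have hapos : 0 ≤ a := by
        have h3 : -(a + b) ≤ 0 := by
          apply nonpos_of'
          intro t ht
          have hd := proj_dir hxz (-1) (-1) t ht (by apply memS' <;> intro h' <;> linarith)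
          rw [← ha, ← hb] at hd
          linarith [hd]
        linarith
      have hcnn : 0 ≤ s * a := mul_nonneg hs hapos
      have hnveq : ‖s • (z - x)‖ = s * a * Real.sqrt 2 := by
        have h2 : ‖s • (z - x)‖^2 = (s * a * Real.sqrt 2)^2 := by
          rw [hnv, ← hab, show (s*a*Real.sqrt 2)^2 = (s*a)^2 * Real.sqrt 2^2 from by ring, hr2]
          ring
        exact eq_of_sq_eq h2 hnvnn (by positivity)
      have claim : d0 + d1 ≤ ‖xbar - x‖ := by
        rcases le_or_gt (d0 + d1) 0 with h | h
        · linarith [hndnn]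
        · have hxb0 : 0 < xbar 0 := by
            by_contra h'
            push_neg at h'
            have h5 := hxbar.1 h'
            simp only [hd0, hd1] at h
            linarith
          have hxb1 : xbar 1 ≤ 0 := hxbar.2 hxb0
          have hu1 : 0 < d0 := by rw [hd0]; linarith
          have hu2 : d1 < 0 := by rw [hd1]; linarith
          have hdd : d0 * d1 ≤ 0 := le_of_lt (mul_neg_of_pos_of_neg hu1 hu2)
          exact claim_c (sq_sum_le hnd hdd) hndnn
      rw [hinz, hnveq, ← hab]
      calc s * a * d0 + s * a * d1 = (s * a) * (d0 + d1) := by ring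
        _ ≤ (s * a) * ‖xbar - x‖ := mul_le_mul_of_nonneg_left claim hcnn
        _ = Real.sqrt 2 / 2 * (s * a * Real.sqrt 2) * ‖xbar - x‖ := by
            linear_combination (-(s * a * ‖xbar - x‖)/2) * hr2
    · -- x = 0
      have hxeq : x 1 = 0 := le_antisymm (by have h5 := hx.1 (le_of_eq hx0); linarith) hx1
      have h1 : a ≤ 0 := by
        apply nonpos_of'
        intro t ht
        have hd := proj_dir hxz 1 0 t ht (by apply memS' <;> intro h' <;> linarith)
        rw [← ha, ← hb] at hd
        linarith [hd]
      have h2 : -a ≤ 0 := by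
        apply nonpos_of'
        intro t ht
        have hd := proj_dir hxz (-1) 0 t ht (by apply memS' <;> intro h' <;> linarith)
        rw [← ha, ← hb] at hd
        linarith [hd]
      have h3 : a - b ≤ 0 := by
        apply nonpos_of'
        intro t ht
        have hd := proj_dir hxz 1 (-1) t ht (by apply memS' <;> intro h' <;> linarith)
        rw [← ha, ← hb] at hd
        linarith [hd]
      have h4 : b - a ≤ 0 := by
        apply nonpos_of'
        intro t ht
        have hd := proj_dir hxz (-1) 1 t ht (by apply memS' <;> intro h' <;> linarith)
        rw [← ha, ← hb] at hd
        linarith [hd]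
      exact trivzero (by linarith) (by linarith)
    · -- case (b): x0 > 0, x1 = 0
      have hxeq : x 1 = 0 := le_antisymm (hx.2 hx0) hx1
      have ha0 : a = 0 := by
        have h1 : a ≤ 0 := by
          apply nonpos_of'
          intro t ht
          have hd := proj_dir hxz 1 0 t ht (by apply memS' <;> intro h' <;> linarith)
          rw [← ha, ← hb] at hd
          linarith [hd]
        have h2 : -a ≤ 0 := by
          apply nonpos_of'
          intro t ht
          have hd := proj_dir hxz (-1) 0 t ht (by apply memS' <;> intro h' <;> linarith)
          rw [← ha, ← hb] at hd
          linarith [hd]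
        linarith
      have hbpos : 0 ≤ b := by
        have h3 : -b ≤ 0 := by
          apply nonpos_of'
          intro t ht
          have hd := proj_dir hxz 0 (-1) t ht (by apply memS' <;> intro h' <;> linarith)
          rw [← ha, ← hb] at hd
          linarith [hd]
        linarith
      have hcnn : 0 ≤ s * b := mul_nonneg hs hbpos
      have hnveq : ‖s • (z - x)‖ = s * b := by
        have h2 : ‖s • (z - x)‖^2 = (s * b)^2 := by rw [hnv, ha0]; ring
        exact eq_of_sq_eq h2 hnvnn hcnn
      have claim : d1 ≤ Real.sqrt 2 / 2 * ‖xbar - x‖ := by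
        rcases le_or_gt d1 0 with h | h
        · have h7 : 0 ≤ Real.sqrt 2 / 2 * ‖xbar - x‖ := by positivity
          linarith
        · have hxb1 : 0 < xbar 1 := by rw [hd1] at h; linarith
          have hxb0 : xbar 0 ≤ 0 := by
            by_contra h'
            push_neg at h'
            have h5 := hxbar.2 h'
            linarith
          have hd0neg : d0 < -d1 := by
            have h5 := hxbar.1 hxb0
            rw [hd0, hd1]; linarith
          have h6 : d1^2 ≤ d0^2 := sq_ineq hd0neg h
          have hkey : 2*d1^2 ≤ ‖xbar - x‖^2 := by linarith [hnd, h6]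
          exact claim_b hkey hndnn
      rw [hinz, hnveq, ha0]
      calc s * 0 * d0 + s * b * d1 = (s * b) * d1 := by ring
        _ ≤ (s * b) * (Real.sqrt 2 / 2 * ‖xbar - x‖) := mul_le_mul_of_nonneg_left claim hcnn
        _ = Real.sqrt 2 / 2 * (s * b) * ‖xbar - x‖ := by ring

lemma le_of_sq_le {p q : ℝ} (h : p^2 ≤ q^2) (hq : 0 ≤ q) : p ≤ q := by nlinarith

lemma dist_lb {p0 p1 s : ℝ} (hs : 0 < s) (h1 : p0 ≤ 0 → p1 ≤ -p0) (h2 : 0 < p0 → p1 ≤ 0) :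
    s^2/2 ≤ p0^2 + (s - p1)^2 := by
  rcases le_or_gt p0 0 with h | h
  · have hp := h1 h
    rcases le_or_gt p1 0 with h' | h'
    · nlinarith
    · nlinarith [sq_nonneg (2*p1 - s)]
  · have hp := h2 h
    nlinarith

def v2 (a b : ℝ) : E2' := !₂[a, b]

@[simp] lemma v2_0 (a b : ℝ) : v2 a b 0 = a := rfl
@[simp] lemma v2_1 (a b : ℝ) : v2 a b 1 = b := rfl

lemma memv2 (u v : ℝ) (h1 : u ≤ 0 → v ≤ -u) (h2 : 0 < u → v ≤ 0) : v2 u v ∈ S' :=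
  memS' u v h1 h2

lemma part1' : ¬ ∀ ε > (0 : ℝ), ∃ δ > (0 : ℝ),
    ∀ u z : E2', dist u 0 < δ → dist z 0 < δ → z ∈ S' →
      ∀ y ∈ projSet S' u, ⟪z - 0, u - y⟫ ≤ ε * ‖z - 0‖ * ‖u - y‖ := by
  intro H
  obtain ⟨δ, hδ, H⟩ := H (1/2) (by norm_num)
  set s := δ/2 with hsdef
  have hs : 0 < s := by simp only [hsdef]; linarith
  have hzΩ : v2 s 0 ∈ S' := by
    apply memv2 <;> intro h' <;> linarith
  have hyΩ : v2 (-(s/2)) (s/2) ∈ S' := by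
    apply memv2 <;> intro h' <;> linarith
  have hnu : ‖v2 0 s‖ = s := by
    have h2 : ‖v2 0 s‖^2 = s^2 := by
      rw [normsq']; simp
    exact eq_of_sq_eq h2 (norm_nonneg _) hs.le
  have hnz : ‖v2 s 0‖ = s := by
    have h2 : ‖v2 s 0‖^2 = s^2 := by
      rw [normsq']; simp
    exact eq_of_sq_eq h2 (norm_nonneg _) hs.le
  have hnuy : ‖v2 0 s - v2 (-(s/2)) (s/2)‖^2 = s^2/2 := by
    rw [normsq']; simp; ring
  have hnuynn : 0 ≤ ‖v2 0 s - v2 (-(s/2)) (s/2)‖ := norm_nonneg _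
  have hproj : v2 (-(s/2)) (s/2) ∈ projSet S' (v2 0 s) := by
    refine ⟨hyΩ, le_antisymm ?_ ?_⟩
    · by_contra h'
      push_neg at h'
      rw [Metric.infDist_lt_iff ⟨_, hzΩ⟩] at h'
      obtain ⟨p, hp, hlt⟩ := h'
      rw [dist_eq_norm] at hlt
      have hle : ‖v2 0 s - v2 (-(s/2)) (s/2)‖ ≤ ‖v2 0 s - p‖ := by
        apply le_of_sq_le _ (norm_nonneg _)
        rw [hnuy, normsq']
        have hcomp0 : (v2 0 s - p) 0 = -(p 0) := by simp
        have hcomp1 : (v2 0 s - p) 1 = s - p 1 := by simp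
        rw [hcomp0, hcomp1]
        have hlb := dist_lb hs hp.1 hp.2
        nlinarith [hlb]
      linarith
    · rw [← dist_eq_norm]
      exact Metric.infDist_le_dist_of_mem hyΩ
  have hd1 : dist (v2 0 s) (0 : E2') < δ := by
    rw [dist_zero_right, hnu]
    simp only [hsdef]; linarith
  have hd2 : dist (v2 s 0) (0 : E2') < δ := by
    rw [dist_zero_right, hnz]
    simp only [hsdef]; linarith
  have hH := H (v2 0 s) (v2 s 0) hd1 hd2 hzΩ _ hproj
  have hi : ⟪v2 s 0 - 0, v2 0 s - v2 (-(s/2)) (s/2)⟫ = s^2/2 := by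
    rw [inner2']; simp; ring
  have hzn : ‖v2 s 0 - 0‖ = s := by rw [sub_zero, hnz]
  have h08 : ‖v2 0 s - v2 (-(s/2)) (s/2)‖ ≤ (4/5) * s := by
    apply le_of_sq_le _ (by linarith)
    rw [hnuy]; nlinarith
  rw [hi, hzn] at hH
  nlinarith [hH, h08, hs]

/-- The pacman-type set is not Clarke regular at the origin but is
`(√2/2, ∞)`-regular there. -/
theorem not_clarke_but_eps_regular :
    let Ω : Set (EuclideanSpace ℝ (Fin 2)) :=
      {p | (p 0 ≤ 0 → p 1 ≤ -p 0) ∧ (0 < p 0 → p 1 ≤ 0)}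
    (¬ ∀ ε > (0 : ℝ), ∃ δ > (0 : ℝ),
        ∀ u z : EuclideanSpace ℝ (Fin 2), dist u 0 < δ → dist z 0 < δ → z ∈ Ω →
          ∀ y ∈ projSet Ω u, ⟪z - 0, u - y⟫ ≤ ε * ‖z - 0‖ * ‖u - y‖) ∧
    (∀ x ∈ Ω, ∀ xbar ∈ Ω, ∀ v ∈ pnCone Ω x,
        ⟪v, xbar - x⟫ ≤ (Real.sqrt 2 / 2) * ‖v‖ * ‖xbar - x‖) := by
  intro Ω
  exact ⟨part1', part2'⟩
end
end

section
/- Let Ω ⊂ E be nonempty, closed, and (ε,δ)-subregular at x̂ with respect to S ⊆ Ω ∩ B_δ(x̂). Define U = {x ∈ E : P_Ω x ⊂ B_δ(x̂)}. Then for all x ∈ U, all x₊ ∈ P_Ω x, and all x̄ ∈ S, ‖x₊ − x̄‖ ≤ (1+ε)‖x − x̄‖. -/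
open RealInnerProductSpace Metric

noncomputable section

variable {E : Type*} [NormedAddCommGroup E] [InnerProductSpace ℝ E]

lemma qnn_aux (e c s : ℝ) (he0 : 0 ≤ e) (he1 : e ≤ 1) (hs : 0 ≤ s) (hc : 0 ≤ c) :
    0 ≤ s^2 - 2*(1-e-e^2)*c*s + (1-e^2)*c^2 := by
  rcases le_or_gt (1 - e - e^2) 0 with h | h
  · nlinarith [mul_nonneg (mul_nonneg (by linarith : (0:ℝ) ≤ e+e^2-1) hc) hs,
      mul_nonneg (mul_nonneg (by linarith : (0:ℝ) ≤ 1-e) (by linarith : (0:ℝ) ≤ 1+e)) (sq_nonneg c),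
      sq_nonneg s]
  · have h2 : (0:ℝ) ≤ 2 - 2*e^2 - e^3 := by nlinarith
    nlinarith [sq_nonneg (s - (1-e-e^2)*c), mul_nonneg (mul_nonneg he0 h2) (sq_nonneg c)]

lemma arith_aux (e r c d : ℝ) (he0 : 0 ≤ e) (he1 : e ≤ 1) (hr : 0 ≤ r) (hrc : r ≤ c)
    (hd : 0 ≤ d) (h : d^2 ≤ c^2 - r^2 + 2*e*r*d) : d ≤ (1+e)*c := by
  have hc : 0 ≤ c := le_trans hr hrc
  have her : e*r ≤ c := le_trans (by nlinarith : e*r ≤ r) hrc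
  by_contra hcon
  push_neg at hcon
  have key : ((1+e)*c - e*r)^2 < c^2 - (1-e^2)*r^2 := by
    have h1 : 0 ≤ (1+e)*c - e*r := by nlinarith
    have h3 : ((1+e)*c - e*r)^2 < (d - e*r)^2 := by nlinarith
    nlinarith [sq_nonneg (d - e*r)]
  have := qnn_aux e c (c-r) he0 he1 (by linarith) hc
  nlinarith [this, key]

/-- The projector onto an `(ε,δ)`-subregular set is `(S, 2ε+ε²)`-nonexpansive on `U`. -/
theorem proj_subregular_nonexpansive
    (Ω : Set E) (hΩ : Ω.Nonempty) (hΩc : IsClosed Ω)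
    (S : Set E) (xhat : E) (ε δ : ℝ) (hε : 0 ≤ ε) (hδ : 0 < δ)
    (hSsub : S ⊆ Ω ∩ Metric.closedBall xhat δ)
    (hsub : ∀ x ∈ Metric.closedBall xhat δ ∩ Ω, ∀ xbar ∈ S ∩ Metric.closedBall xhat δ,
        ∀ v ∈ pnCone Ω x, ⟪v, xbar - x⟫ ≤ ε * ‖v‖ * ‖xbar - x‖) :
    ∀ x ∈ {x : E | projSet Ω x ⊆ Metric.closedBall xhat δ},
      ∀ xp ∈ projSet Ω x, ∀ xbar ∈ S, ‖xp - xbar‖ ≤ (1 + ε) * ‖x - xbar‖ := by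
  intro x hx xp hxp xbar hxbar
  have hxpΩ : xp ∈ Ω := hxp.1
  have hxpB : xp ∈ Metric.closedBall xhat δ := hx hxp
  have hxbarΩ : xbar ∈ Ω := (hSsub hxbar).1
  have hxbarB : xbar ∈ Metric.closedBall xhat δ := (hSsub hxbar).2
  have hv : x - xp ∈ pnCone Ω xp := ⟨1, zero_le_one, x, hxp, by simp⟩
  have hinner : ⟪x - xp, xbar - xp⟫ ≤ ε * ‖x - xp‖ * ‖xbar - xp‖ :=
    hsub xp ⟨hxpB, hxpΩ⟩ xbar ⟨hxbar, hxbarB⟩ (x - xp) hv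
  have hCS : ⟪x - xp, xbar - xp⟫ ≤ ‖x - xp‖ * ‖xbar - xp‖ := real_inner_le_norm _ _
  set e := min ε 1 with he
  have he0 : 0 ≤ e := le_min hε zero_le_one
  have he1 : e ≤ 1 := min_le_right _ _
  have hinner' : ⟪x - xp, xbar - xp⟫ ≤ e * ‖x - xp‖ * ‖xbar - xp‖ := by
    rcases min_cases ε 1 with ⟨h1, _⟩ | ⟨h1, _⟩
    · rw [he, h1]; exact hinner
    · rw [he, h1, one_mul]; exact hCS
  set r := ‖x - xp‖ with hr
  set d := ‖xp - xbar‖ with hd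
  set c := ‖x - xbar‖ with hc
  have hrc : r ≤ c := by
    rw [hr, hxp.2, hc, ← dist_eq_norm]
    exact Metric.infDist_le_dist_of_mem hxbarΩ
  have hid : c^2 = r^2 + 2 * ⟪x - xp, xp - xbar⟫ + d^2 := by
    have : x - xbar = (x - xp) + (xp - xbar) := by abel
    rw [hc, this, norm_add_sq_real, hr, hd]
  have hflip : ⟪x - xp, xp - xbar⟫ = -⟪x - xp, xbar - xp⟫ := by
    rw [← inner_neg_right]; congr 1; abel
  have hnorm : ‖xbar - xp‖ = d := by rw [hd, norm_sub_rev]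
  have hkey : d^2 ≤ c^2 - r^2 + 2*e*r*d := by
    rw [hnorm] at hinner'
    rw [hid, hflip]; nlinarith [hinner']
  have := arith_aux e r c d he0 he1 (norm_nonneg _) hrc (norm_nonneg _) hkey
  calc d ≤ (1+e)*c := this
    _ ≤ (1+ε)*c := by
        have : e ≤ ε := min_le_left _ _
        nlinarith [norm_nonneg (x - xbar), this]
end
end

section
/- Let Ω ⊂ E be nonempty, closed, and (ε,δ)-subregular at x̂ with respect to S ⊆ Ω ∩ B_δ(x̂). Define U = {x ∈ E : P_Ω x ⊂ B_δ(x̂)}. Then the projector P_Ω is (S, 2ε+2ε²)-firmly nonexpansive on U: for all x ∈ U, x₊ ∈ P_Ω x, x̄ ∈ S, ‖x₊ − x̄‖² + ‖x − x₊‖² ≤ (1 + 2ε + 2ε²)‖x − x̄‖². -/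
open RealInnerProductSpace Metric

noncomputable section

variable {E : Type*} [NormedAddCommGroup E] [InnerProductSpace ℝ E]

lemma key_ineq (ε a c t : ℝ) (hε : 0 ≤ ε) (ha : 0 ≤ a) (hc : 0 ≤ c) (hat : a ≤ t)
    (hct : c ≤ a + t) (h : c ^ 2 + a ^ 2 ≤ t ^ 2 + 2 * ε * a * c) :
    c ^ 2 + a ^ 2 ≤ (1 + 2 * ε + 2 * ε ^ 2) * t ^ 2 := by
  have ht : 0 ≤ t := le_trans ha hat
  rcases le_or_gt ε 1 with hε1 | hε1
  · rcases le_or_gt c (ε * a) with hca | hca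
    · nlinarith [sq_nonneg (a - t), mul_nonneg ha hc, mul_nonneg hε ha]
    · -- (c - εa)² ≤ t² - a² + ε²a² ≤ t², so c ≤ εa + t
      have h1 : (c - ε * a) ^ 2 ≤ t ^ 2 := by
        nlinarith [mul_le_mul hε1 hε1 hε zero_le_one, sq_nonneg a]
      have h2 : c - ε * a ≤ t := le_of_pow_le_pow_left₀ two_ne_zero ht h1
      have hA : 0 ≤ ε * a * (ε * a + t - c) :=
        mul_nonneg (mul_nonneg hε ha) (by linarith)
      have hB : 0 ≤ ε * ε * ((t - a) * (t + a)) :=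
        mul_nonneg (mul_nonneg hε hε) (mul_nonneg (by linarith) (by linarith))
      have hC : 0 ≤ ε * ((t - a) * t) :=
        mul_nonneg hε (mul_nonneg (by linarith) ht)
      nlinarith [hA, hB, hC]
  · have hc2 : c * c ≤ (a + t) * (a + t) := mul_self_le_mul_self hc hct
    nlinarith [mul_nonneg (mul_nonneg (sub_nonneg.2 hε1.le) hε) (sq_nonneg t),
      mul_nonneg (sub_nonneg.2 hε1.le) (sq_nonneg t),
      mul_nonneg ha (sub_nonneg.2 hat), sq_nonneg (a - t)]

/-- The projector onto an `(ε,δ)`-subregular set is `(S, 2ε+2ε²)`-firmly nonexpansive on `U`. -/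
theorem proj_subregular_firmly_nonexpansive
    (Ω : Set E) (hΩ : Ω.Nonempty) (hΩc : IsClosed Ω)
    (S : Set E) (xhat : E) (ε δ : ℝ) (hε : 0 ≤ ε) (hδ : 0 < δ)
    (hSsub : S ⊆ Ω ∩ Metric.closedBall xhat δ)
    (hsub : ∀ x ∈ Metric.closedBall xhat δ ∩ Ω, ∀ xbar ∈ S ∩ Metric.closedBall xhat δ,
        ∀ v ∈ pnCone Ω x, ⟪v, xbar - x⟫ ≤ ε * ‖v‖ * ‖xbar - x‖) :
    ∀ x ∈ {x : E | projSet Ω x ⊆ Metric.closedBall xhat δ},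
      ∀ xp ∈ projSet Ω x, ∀ xbar ∈ S,
        ‖xp - xbar‖ ^ 2 + ‖x - xp‖ ^ 2 ≤ (1 + 2 * ε + 2 * ε ^ 2) * ‖x - xbar‖ ^ 2 := by
  intro x hx xp hxp xbar hxbar
  obtain ⟨hxbarΩ, hxbarB⟩ := hSsub hxbar
  have hxpB : xp ∈ Metric.closedBall xhat δ := hx hxp
  have hxpΩ : xp ∈ Ω := hxp.1
  -- v = x - xp is a proximal normal at xp
  have hv : x - xp ∈ pnCone Ω xp :=
    ⟨1, zero_le_one, x, hxp, (one_smul ℝ _).symm⟩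
  have hkey : ⟪x - xp, xbar - xp⟫ ≤ ε * ‖x - xp‖ * ‖xbar - xp‖ :=
    hsub xp ⟨hxpB, hxpΩ⟩ xbar ⟨hxbar, hxbarB⟩ _ hv
  -- a ≤ t : projection minimizes distance
  have hat : ‖x - xp‖ ≤ ‖x - xbar‖ := by
    rw [hxp.2]
    calc Metric.infDist x Ω ≤ dist x xbar := Metric.infDist_le_dist_of_mem hxbarΩ
    _ = ‖x - xbar‖ := by rw [dist_eq_norm]
  -- triangle: c ≤ a + t
  have hct : ‖xp - xbar‖ ≤ ‖x - xp‖ + ‖x - xbar‖ := by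
    have e : xp - xbar = -(x - xp) + (x - xbar) := by abel
    calc ‖xp - xbar‖ = ‖-(x - xp) + (x - xbar)‖ := by rw [e]
    _ ≤ ‖-(x - xp)‖ + ‖x - xbar‖ := norm_add_le _ _
    _ = ‖x - xp‖ + ‖x - xbar‖ := by rw [norm_neg]
  -- the inner product identity
  have hid : ‖x - xbar‖ ^ 2 = ‖x - xp‖ ^ 2 + 2 * ⟪x - xp, xp - xbar⟫ + ‖xp - xbar‖ ^ 2 := by
    have : x - xbar = (x - xp) + (xp - xbar) := by abel
    rw [this, @norm_add_sq_real]
  have hinner : ⟪x - xp, xp - xbar⟫ = - ⟪x - xp, xbar - xp⟫ := by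
    rw [show xp - xbar = -(xbar - xp) by abel, inner_neg_right]
  have h : ‖xp - xbar‖ ^ 2 + ‖x - xp‖ ^ 2
      ≤ ‖x - xbar‖ ^ 2 + 2 * ε * ‖x - xp‖ * ‖xp - xbar‖ := by
    have h2 : ‖xbar - xp‖ = ‖xp - xbar‖ := norm_sub_rev _ _
    rw [hid, hinner]
    rw [h2] at hkey
    linarith
  exact key_ineq ε ‖x - xp‖ ‖xp - xbar‖ ‖x - xbar‖ hε (norm_nonneg _) (norm_nonneg _)
    hat hct h
end
end

section
/- Let Ω ⊂ E be nonempty, closed, and (ε,δ)-subregular at x̂ with respect to S ⊆ Ω ∩ B_δ(x̂), and U = {x : P_Ω x ⊂ B_δ(x̂)}. Then the reflector R_Ω = 2P_Ω − Id is (S, 4ε+4ε²)-nonexpansive on U: for all x ∈ U, x₊ ∈ R_Ω x, x̄ ∈ S, ‖x₊ − x̄‖ ≤ √(1+4ε+4ε²) ‖x − x̄‖. -/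
open RealInnerProductSpace Metric

noncomputable section

variable {E : Type*} [NormedAddCommGroup E] [InnerProductSpace ℝ E]

theorem scal_key (a b c p ε : ℝ) (hε : 0 ≤ ε) (ha : 0 ≤ a) (hb : 0 ≤ b) (hc : 0 ≤ c)
    (h1 : p ≤ ε*a*b) (h2 : c^2 = a^2 + b^2 - 2*p) (h3 : a ≤ c) (h4 : b ≤ a + c) :
    p ≤ (ε + ε^2) * c^2 := by
  rcases le_total ε 1 with hε1 | hε1
  · have h5 : 0 ≤ (1 - ε^2) * a^2 := mul_nonneg (by nlinarith) (sq_nonneg a)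
    have hbac : b ≤ ε*a + c := by nlinarith [h5]
    nlinarith [mul_nonneg (mul_nonneg hε ha) (sub_nonneg.2 hbac),
      mul_nonneg hε (mul_nonneg (sub_nonneg.2 h3) (add_nonneg (mul_nonneg hε ha) hc)),
      mul_nonneg (mul_nonneg hε hε) (mul_nonneg (sub_nonneg.2 h3) (add_nonneg ha hc))]
  · nlinarith [mul_nonneg (mul_nonneg hε ha) (sub_nonneg.2 h4),
      mul_nonneg hε (mul_nonneg (sub_nonneg.2 h3) (add_nonneg ha hc)),
      mul_nonneg (mul_nonneg (sub_nonneg.2 hε1) hc) hc]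

/-- The reflector across an `(ε,δ)`-subregular set is `(S, 4ε+4ε²)`-nonexpansive on `U`. -/
theorem refl_subregular_nonexpansive
    (Ω : Set E) (hΩ : Ω.Nonempty) (hΩc : IsClosed Ω)
    (S : Set E) (xhat : E) (ε δ : ℝ) (hε : 0 ≤ ε) (hδ : 0 < δ)
    (hSsub : S ⊆ Ω ∩ Metric.closedBall xhat δ)
    (hsub : ∀ x ∈ Metric.closedBall xhat δ ∩ Ω, ∀ xbar ∈ S ∩ Metric.closedBall xhat δ,
        ∀ v ∈ pnCone Ω x, ⟪v, xbar - x⟫ ≤ ε * ‖v‖ * ‖xbar - x‖) :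
    ∀ x ∈ {x : E | projSet Ω x ⊆ Metric.closedBall xhat δ},
      ∀ xp ∈ reflSet Ω x, ∀ xbar ∈ S,
        ‖xp - xbar‖ ≤ Real.sqrt (1 + 4 * ε + 4 * ε ^ 2) * ‖x - xbar‖ := by
  intro x hx xp hxp xbar hxbar
  obtain ⟨y, hy, rfl⟩ := hxp
  obtain ⟨hxbarΩ, hxbarB⟩ := hSsub hxbar
  have hyB : y ∈ Metric.closedBall xhat δ := hx hy
  -- the vector x - y is a proximal normal at y
  have hvcone : x - y ∈ pnCone Ω y := ⟨1, zero_le_one, x, hy, by simp⟩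
  have hsubreg : ⟪x - y, xbar - y⟫ ≤ ε * ‖x - y‖ * ‖xbar - y‖ :=
    hsub y ⟨hyB, hy.1⟩ xbar ⟨hxbar, hxbarB⟩ (x - y) hvcone
  -- ‖x - y‖ ≤ ‖x - xbar‖
  have hac : ‖x - y‖ ≤ ‖x - xbar‖ := by
    rw [hy.2, ← dist_eq_norm]
    exact Metric.infDist_le_dist_of_mem hxbarΩ
  -- triangle inequality
  have htri : ‖xbar - y‖ ≤ ‖x - y‖ + ‖x - xbar‖ := by
    have := norm_sub_le_norm_sub_add_norm_sub xbar x y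
    have h2 := norm_sub_rev xbar x
    linarith [norm_sub_le_norm_sub_add_norm_sub xbar x y, (norm_sub_rev xbar x)]
  have e1 : (2:ℝ) • y - x - xbar = -((x - y) + (xbar - y)) := by
    rw [two_smul]; abel
  have e2 : x - xbar = (x - y) - (xbar - y) := by abel
  have hc2 : ‖x - xbar‖^2 = ‖x - y‖^2 + ‖xbar - y‖^2 - 2*⟪x - y, xbar - y⟫ := by
    rw [e2, @norm_sub_sq_real]; ring
  -- key identity
  have key : ‖(2:ℝ) • y - x - xbar‖^2 = ‖x - xbar‖^2 + 4 * ⟪x - y, xbar - y⟫ := by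
    rw [e1, norm_neg, @norm_add_sq_real, hc2]
    ring
  have hkey2 : ⟪x - y, xbar - y⟫ ≤ (ε + ε^2) * ‖x - xbar‖^2 :=
    scal_key ‖x - y‖ ‖xbar - y‖ ‖x - xbar‖ ⟪x - y, xbar - y⟫ ε hε (norm_nonneg _)
      (norm_nonneg _) (norm_nonneg _) hsubreg hc2 hac htri
  have hsq : ‖(2:ℝ) • y - x - xbar‖^2 ≤ (1 + 4*ε + 4*ε^2) * ‖x - xbar‖^2 := by
    rw [key]; nlinarith [hkey2]
  have hns : 0 ≤ 1 + 4*ε + 4*ε^2 := by positivity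
  calc ‖(2:ℝ) • y - x - xbar‖ = Real.sqrt (‖(2:ℝ) • y - x - xbar‖^2) :=
        (Real.sqrt_sq (norm_nonneg _)).symm
    _ ≤ Real.sqrt ((1 + 4*ε + 4*ε^2) * ‖x - xbar‖^2) := Real.sqrt_le_sqrt hsq
    _ = Real.sqrt (1 + 4*ε + 4*ε^2) * ‖x - xbar‖ := by
        rw [Real.sqrt_mul hns, Real.sqrt_sq (norm_nonneg _)]
end
end

section
/- Let A, B ⊂ E be closed, nonempty, and respectively (ε_A,δ)- and (ε_B,δ)-subregular at x̂ with respect to S ⊂ B_δ(x̂) ∩ (A ∩ B). Let U = {z ∈ E : P_B z ⊂ B_δ(x̂) and P_A R_B z ⊂ B_δ(x̂)}. Then the Douglas–Rachford operator T_DR = ½(R_A R_B + Id) is (S, ε̃)-firmly nonexpansive on U with ε̃ = 2ε_A(1+ε_A) + 2ε_B(1+ε_B) + 8ε_A(1+ε_A)ε_B(1+ε_B): for all x ∈ U, x₊ ∈ T_DR x, x̄ ∈ S, ‖x₊ − x̄‖² + ‖x − x₊‖² ≤ (1+ε̃)‖x − x̄‖². -/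
open RealInnerProductSpace Metric

noncomputable section

variable {E : Type*} [NormedAddCommGroup E] [InnerProductSpace ℝ E]

lemma reflStep (Ω : Set E) (x y xbar : E) (ε : ℝ) (hε : 0 ≤ ε)
    (hy : y ∈ projSet Ω x) (hxbar : xbar ∈ Ω)
    (hineq : ⟪x - y, xbar - y⟫ ≤ ε * ‖x - y‖ * ‖xbar - y‖) :
    ‖(2:ℝ) • y - x - xbar‖ ^ 2 ≤ (1 + 4*ε*(1+ε)) * ‖x - xbar‖ ^ 2 := by
  have hac : ‖x - y‖ ≤ ‖x - xbar‖ := by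
    rw [hy.2, ← dist_eq_norm]
    exact Metric.infDist_le_dist_of_mem hxbar
  set a := ‖x - y‖ with ha
  set b := ‖xbar - y‖ with hbdef
  set c := ‖x - xbar‖ with hc
  have ha0 : 0 ≤ a := norm_nonneg _
  have hb0 : 0 ≤ b := norm_nonneg _
  have hc0 : 0 ≤ c := norm_nonneg _
  have htri : b ≤ c + a := by
    calc b = ‖xbar - y‖ := hbdef
    _ ≤ ‖xbar - x‖ + ‖x - y‖ := norm_sub_le_norm_sub_add_norm_sub _ _ _
    _ = c + a := by rw [norm_sub_rev]
  rcases le_total 1 ε with h1 | h1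
  · -- ε ≥ 1 : crude triangle bound
    have heq : (2:ℝ) • y - x - xbar = (y - x) + (y - xbar) := by module
    have ht : ‖(2:ℝ) • y - x - xbar‖ ≤ 3 * c := by
      rw [heq]
      calc ‖(y - x) + (y - xbar)‖ ≤ ‖y - x‖ + ‖y - xbar‖ := norm_add_le _ _
      _ = a + b := by rw [norm_sub_rev y x, norm_sub_rev y xbar]
      _ ≤ c + (c + c) := by linarith
      _ = 3 * c := by ring
    have hsq := pow_le_pow_left₀ (norm_nonneg _) ht 2
    have he2 : (0:ℝ) ≤ ε^2 - 1 := by nlinarith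
    nlinarith [hsq, mul_nonneg (sub_nonneg.2 h1) (sq_nonneg c), mul_nonneg he2 (sq_nonneg c)]
  · -- ε ≤ 1
    have hsplit : c^2 = a^2 + 2*⟪x - y, y - xbar⟫ + ‖y - xbar‖^2 := by
      have h : x - xbar = (x - y) + (y - xbar) := by abel
      rw [hc, h, norm_add_sq_real]
    have hinner : ⟪x - y, y - xbar⟫ = -⟪x - y, xbar - y⟫ := by
      rw [← inner_neg_right]; congr 1; abel
    have hbn : ‖y - xbar‖ = b := norm_sub_rev _ _
    rw [hbn, hinner] at hsplit
    have key : b^2 - 2*(ε*a*b) + a^2 ≤ c^2 := by nlinarith [hsplit, hineq]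
    have hb : b ≤ (1+ε) * c := by
      have h2 : (b - ε*a)^2 ≤ c^2 := by
        nlinarith [key, mul_nonneg (mul_nonneg (sub_nonneg.2 h1) (by linarith : (0:ℝ) ≤ 1+ε)) (sq_nonneg a)]
      have h3 : b - ε*a ≤ c := le_of_sq_le_sq h2 hc0
      nlinarith [mul_le_mul_of_nonneg_left hac hε]
    have hid : ‖(2:ℝ) • y - x - xbar‖^2 = c^2 + 4*⟪x - y, xbar - y⟫ := by
      have h1' : (2:ℝ) • y - x - xbar = (x - xbar) - (2:ℝ) • (x - y) := by module
      rw [hc, h1', norm_sub_sq_real, norm_smul, real_inner_smul_right]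
      have h2 : ⟪x - xbar, x - y⟫ = ‖x - y‖^2 - ⟪x - y, xbar - y⟫ := by
        rw [real_inner_comm, ← @real_inner_self_eq_norm_sq, ← inner_sub_right]
        congr 1; abel
      rw [h2]
      simp
      ring
    rw [hid]
    have h4 : ⟪x - y, xbar - y⟫ ≤ ε * (a*b) := by rw [← mul_assoc]; exact hineq
    nlinarith [h4, mul_le_mul_of_nonneg_left hb (mul_nonneg hε ha0),
      mul_le_mul_of_nonneg_right hac (mul_nonneg hε (by linarith : (0:ℝ) ≤ (1+ε)*c))]

lemma par_id (u v : E) :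
    ‖(1/2:ℝ) • (u + v)‖^2 + ‖(1/2:ℝ) • (v - u)‖^2 = (1/2)*(‖u‖^2 + ‖v‖^2) := by
  have hn : ‖(1/2:ℝ)‖ = 1/2 := by rw [Real.norm_eq_abs]; norm_num
  rw [norm_smul, norm_smul, hn, mul_pow, mul_pow, norm_add_sq_real, norm_sub_sq_real,
    real_inner_comm v u]
  ring

/-- `(S, ε̃)`-firm nonexpansiveness of the Douglas–Rachford operator for subregular sets. -/
theorem TDR_firmly_nonexpansive_subregular
    (A B : Set E) (hA : A.Nonempty) (hB : B.Nonempty)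
    (hAc : IsClosed A) (hBc : IsClosed B)
    (S : Set E) (xhat : E) (εA εB δ : ℝ) (hεA : 0 ≤ εA) (hεB : 0 ≤ εB) (hδ : 0 < δ)
    (hSsub : S ⊆ Metric.closedBall xhat δ ∩ (A ∩ B))
    (hsubA : ∀ x ∈ Metric.closedBall xhat δ ∩ A, ∀ xbar ∈ S ∩ Metric.closedBall xhat δ,
        ∀ v ∈ pnCone A x, ⟪v, xbar - x⟫ ≤ εA * ‖v‖ * ‖xbar - x‖)
    (hsubB : ∀ x ∈ Metric.closedBall xhat δ ∩ B, ∀ xbar ∈ S ∩ Metric.closedBall xhat δ,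
        ∀ v ∈ pnCone B x, ⟪v, xbar - x⟫ ≤ εB * ‖v‖ * ‖xbar - x‖) :
    ∀ x ∈ {z : E | projSet B z ⊆ Metric.closedBall xhat δ ∧
        (∀ y ∈ reflSet B z, projSet A y ⊆ Metric.closedBall xhat δ)},
      ∀ xp ∈ TDR A B x, ∀ xbar ∈ S,
        ‖xp - xbar‖ ^ 2 + ‖x - xp‖ ^ 2
          ≤ (1 + (2 * εA * (1 + εA) + 2 * εB * (1 + εB)
              + 8 * εA * (1 + εA) * εB * (1 + εB))) * ‖x - xbar‖ ^ 2 := by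
  rintro x ⟨hPB, hPA⟩ xp hxp xbar hxbar
  obtain ⟨z, hz, hxpeq⟩ := hxp
  rw [rARB, Set.mem_iUnion₂] at hz
  obtain ⟨w, hw, hzw⟩ := hz
  obtain ⟨yB, hyB, hweq⟩ := hw
  obtain ⟨yA, hyA, hzeq⟩ := hzw
  have hxbarB : xbar ∈ B := ((hSsub hxbar).2).2
  have hxbarA : xbar ∈ A := ((hSsub hxbar).2).1
  have hxbarBall : xbar ∈ Metric.closedBall xhat δ := (hSsub hxbar).1
  -- subregularity inequality for B at yB
  have hvB : x - yB ∈ pnCone B yB := ⟨1, zero_le_one, x, hyB, (one_smul ℝ _).symm⟩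
  have hineqB : ⟪x - yB, xbar - yB⟫ ≤ εB * ‖x - yB‖ * ‖xbar - yB‖ :=
    hsubB yB ⟨hPB hyB, hyB.1⟩ xbar ⟨hxbar, hxbarBall⟩ _ hvB
  have hBstep : ‖w - xbar‖ ^ 2 ≤ (1 + 4*εB*(1+εB)) * ‖x - xbar‖ ^ 2 := by
    rw [hweq]; exact reflStep B x yB xbar εB hεB hyB hxbarB hineqB
  -- subregularity inequality for A at yA
  have hyABall : yA ∈ Metric.closedBall xhat δ := hPA w ⟨yB, hyB, hweq⟩ hyA
  have hvA : w - yA ∈ pnCone A yA := ⟨1, zero_le_one, w, hyA, (one_smul ℝ _).symm⟩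
  have hineqA : ⟪w - yA, xbar - yA⟫ ≤ εA * ‖w - yA‖ * ‖xbar - yA‖ :=
    hsubA yA ⟨hyABall, hyA.1⟩ xbar ⟨hxbar, hxbarBall⟩ _ hvA
  have hAstep : ‖z - xbar‖ ^ 2 ≤ (1 + 4*εA*(1+εA)) * ‖w - xbar‖ ^ 2 := by
    rw [hzeq]; exact reflStep A w yA xbar εA hεA hyA hxbarA hineqA
  -- combine
  have hzc : ‖z - xbar‖ ^ 2 ≤ (1 + 4*εA*(1+εA)) * ((1 + 4*εB*(1+εB)) * ‖x - xbar‖ ^ 2) :=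
    le_trans hAstep (mul_le_mul_of_nonneg_left hBstep (by nlinarith))
  -- parallelogram identity
  have hpar : ‖xp - xbar‖ ^ 2 + ‖x - xp‖ ^ 2
      = (1/2) * (‖z - xbar‖ ^ 2 + ‖x - xbar‖ ^ 2) := by
    have e1 : xp - xbar = ((1:ℝ)/2) • ((z - xbar) + (x - xbar)) := by
      rw [hxpeq]; module
    have e2 : x - xp = ((1:ℝ)/2) • ((x - xbar) - (z - xbar)) := by
      rw [hxpeq]; module
    rw [e1, e2]
    exact par_id (z - xbar) (x - xbar)
  rw [hpar]
  nlinarith [hzc, sq_nonneg ‖x - xbar‖]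
end
end

section
/- Let D ⊂ E, S ⊂ Fix T, T : D ⇉ E, U ⊂ D. If (a) T is (S, ε)-firmly nonexpansive on U, and (b) there is λ > 0 with ‖x − x₊‖ ≥ λ dist(x, S) for all x₊ ∈ Tx, x ∈ U, then dist(x₊, S) ≤ √(1 + ε − λ²) · dist(x, S) for all x₊ ∈ Tx, x ∈ U. -/
open RealInnerProductSpace Metric

noncomputable section

variable {E : Type*} [NormedAddCommGroup E] [InnerProductSpace ℝ E]

/-- Linear decrease of the distance to `S` for `(S,ε)`-firmly nonexpansive coercive maps. -/
theorem dist_decrease_of_firmly_nonexpansive_coercive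
    (D S U : Set E) (hU : U ⊆ D) (hS : S.Nonempty) (hSc : IsClosed S)
    (T : E → Set E) (hfix : ∀ x ∈ S, x ∈ T x)
    (ε lam : ℝ) (hε : 0 ≤ ε) (hlam : 0 < lam)
    (ha : ∀ x ∈ U, ∀ xbar ∈ S, ∀ xp ∈ T x,
        ‖xp - xbar‖ ^ 2 + ‖x - xp‖ ^ 2 ≤ (1 + ε) * ‖x - xbar‖ ^ 2)
    (hb : ∀ x ∈ U, ∀ xp ∈ T x, ‖x - xp‖ ≥ lam * Metric.infDist x S) :
    ∀ x ∈ U, ∀ xp ∈ T x,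
      Metric.infDist xp S ≤ Real.sqrt (1 + ε - lam ^ 2) * Metric.infDist x S := by
  intro x hx xp hxp
  set d := Metric.infDist x S with hd
  have hd0 : 0 ≤ d := Metric.infDist_nonneg
  set L : ℝ := Metric.infDist xp S ^ 2 + ‖x - xp‖ ^ 2 with hL
  have hL0 : 0 ≤ L := by positivity
  have h1ε : (0:ℝ) < 1 + ε := by linarith
  -- For each xbar ∈ S, L ≤ (1+ε) * dist x xbar ^ 2
  have key : ∀ xbar ∈ S, L ≤ (1 + ε) * ‖x - xbar‖ ^ 2 := by
    intro xbar hxbar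
    have h1 : Metric.infDist xp S ≤ ‖xp - xbar‖ := by
      rw [← dist_eq_norm]
      exact Metric.infDist_le_dist_of_mem hxbar
    have h2 : Metric.infDist xp S ^ 2 ≤ ‖xp - xbar‖ ^ 2 := by
      apply sq_le_sq' _ h1
      have := Metric.infDist_nonneg (x := xp) (s := S)
      nlinarith [norm_nonneg (xp - xbar)]
    have := ha x hx xbar hxbar xp hxp
    simp only [hL]
    linarith
  -- Hence L ≤ (1+ε) * d^2, by passing to the infimum
  have hsq : Real.sqrt (L / (1 + ε)) ≤ d := by
    rw [hd]
    by_contra hcon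
    push_neg at hcon
    obtain ⟨y, hy, hylt⟩ := (Metric.infDist_lt_iff hS).1 hcon
    rw [dist_eq_norm] at hylt
    have hle : Real.sqrt (L / (1 + ε)) ≤ ‖x - y‖ := by
      have := key y hy
      have hdiv : L / (1 + ε) ≤ ‖x - y‖ ^ 2 := by
        rw [div_le_iff₀ h1ε]
        linarith
      calc Real.sqrt (L / (1 + ε)) ≤ Real.sqrt (‖x - y‖ ^ 2) :=
            Real.sqrt_le_sqrt hdiv
        _ = ‖x - y‖ := by
            rw [Real.sqrt_sq (norm_nonneg _)]
    linarith
  have hLd : L ≤ (1 + ε) * d ^ 2 := by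
    have h3 : Real.sqrt (L / (1 + ε)) ^ 2 ≤ d ^ 2 := by
      apply sq_le_sq' _ hsq
      have := Real.sqrt_nonneg (L / (1 + ε))
      linarith
    rw [Real.sq_sqrt (by positivity)] at h3
    rw [div_le_iff₀ h1ε] at h3
    linarith
  -- now use coercivity
  have hc := hb x hx xp hxp
  have hc2 : (lam * d) ^ 2 ≤ ‖x - xp‖ ^ 2 := by
    apply sq_le_sq' _ hc
    nlinarith [norm_nonneg (x - xp), mul_nonneg hlam.le hd0]
  have hfinal : Metric.infDist xp S ^ 2 ≤ (1 + ε - lam ^ 2) * d ^ 2 := by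
    simp only [hL] at hLd
    nlinarith
  calc Metric.infDist xp S = Real.sqrt (Metric.infDist xp S ^ 2) := by
        rw [Real.sqrt_sq Metric.infDist_nonneg]
    _ ≤ Real.sqrt ((1 + ε - lam ^ 2) * d ^ 2) := Real.sqrt_le_sqrt hfinal
    _ = Real.sqrt (1 + ε - lam ^ 2) * Real.sqrt (d ^ 2) :=
        Real.sqrt_mul' _ (by positivity)
    _ = Real.sqrt (1 + ε - lam ^ 2) * d := by rw [Real.sqrt_sq hd0]
end
end

section
/- Let A, B be nonempty closed subsets of E with B convex, and suppose {A,B} is locally linearly regular at x̂ ∈ A ∩ B on B_δ(x̂) with constant κ. Then for all x ∈ A ∩ B_δ(x̂), dist(P_B x, A ∩ B) ≤ √(1 − 1/κ²) · dist(x, A ∩ B). -/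
open RealInnerProductSpace Metric

noncomputable section

variable {E : Type*} [NormedAddCommGroup E] [InnerProductSpace ℝ E]

/-- Projections onto a convex set under local linear regularity (Gubin–Polyak–Raik). -/
theorem proj_convex_linear_decrease
    (A B : Set E) (hA : A.Nonempty) (hB : B.Nonempty)
    (hAc : IsClosed A) (hBc : IsClosed B) (hBconv : Convex ℝ B)
    (xhat : E) (hxhat : xhat ∈ A ∩ B) (δ κ : ℝ) (hδ : 0 < δ) (hκ : 0 < κ)
    (PB : E → E)
    (hPB : ∀ x : E, PB x ∈ B ∧ ∀ y ∈ B, ‖x - PB x‖ ≤ ‖x - y‖)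
    (hreg : ∀ x ∈ Metric.closedBall xhat δ,
        Metric.infDist x (A ∩ B) ≤ κ * max (Metric.infDist x A) (Metric.infDist x B)) :
    ∀ x ∈ A ∩ Metric.closedBall xhat δ,
      Metric.infDist (PB x) (A ∩ B)
        ≤ Real.sqrt (1 - (1 / κ) ^ 2) * Metric.infDist x (A ∩ B) := by
  obtain ⟨xhatA, xhatB⟩ := hxhat
  intro x hx
  obtain ⟨hxA, hxball⟩ := hx
  set y := PB x with hy
  have hyB : y ∈ B := (hPB x).1
  have hABne : (A ∩ B).Nonempty := ⟨xhat, xhatA, xhatB⟩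
  set d := Metric.infDist x (A ∩ B) with hd
  set q := Metric.infDist y (A ∩ B) with hq
  set h := ‖x - y‖ with hh
  have hd0 : 0 ≤ d := Metric.infDist_nonneg
  have hq0 : 0 ≤ q := Metric.infDist_nonneg
  have hh0 : 0 ≤ h := norm_nonneg _
  -- obtuse angle property of projection onto convex set
  have hobt : ∀ z ∈ B, ⟪x - y, z - y⟫ ≤ 0 := by
    haveI : Nonempty B := ⟨⟨y, hyB⟩⟩
    have heq : ‖x - y‖ = ⨅ w : B, ‖x - w‖ := by
      apply le_antisymm
      · exact le_ciInf fun w => (hPB x).2 w w.2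
      · exact ciInf_le ⟨0, fun _ ⟨_, hw⟩ => hw ▸ norm_nonneg _⟩ (⟨y, hyB⟩ : B)
    exact (norm_eq_iInf_iff_real_inner_le_zero hBconv hyB).1 heq
  -- for any z ∈ A ∩ B, sqrt (q² + h²) ≤ dist x z
  have hzbd : ∀ z ∈ A ∩ B, Real.sqrt (q ^ 2 + h ^ 2) ≤ dist x z := by
    intro z hz
    have hzB : z ∈ B := hz.2
    have expand : ‖x - z‖ ^ 2 = ‖x - y‖ ^ 2 - 2 * ⟪x - y, z - y⟫ + ‖z - y‖ ^ 2 := by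
      have hxz : x - z = (x - y) - (z - y) := by abel
      rw [hxz, norm_sub_sq_real]
    have hi := hobt z hzB
    have hq2 : q ≤ ‖y - z‖ := by
      have := Metric.infDist_le_dist_of_mem (x := y) hz
      rwa [dist_eq_norm] at this
    have hnn : ‖y - z‖ = ‖z - y‖ := norm_sub_rev _ _
    have hp : q ^ 2 + h ^ 2 ≤ ‖x - z‖ ^ 2 := by
      rw [expand]
      nlinarith [norm_nonneg (y - z), hnn ▸ hq2]
    calc Real.sqrt (q ^ 2 + h ^ 2) ≤ Real.sqrt (‖x - z‖ ^ 2) := Real.sqrt_le_sqrt hp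
      _ = ‖x - z‖ := Real.sqrt_sq (norm_nonneg _)
      _ = dist x z := (dist_eq_norm _ _).symm
  -- Pythagoras-type inequality: q² + h² ≤ d²
  have hsqd : Real.sqrt (q ^ 2 + h ^ 2) ≤ d := by
    by_contra hc
    push_neg at hc
    obtain ⟨z, hz, hzd⟩ := (Metric.infDist_lt_iff hABne).1 hc
    exact absurd hzd (not_lt.2 (hzbd z hz))
  have key : q ^ 2 + h ^ 2 ≤ d ^ 2 := by
    nlinarith [Real.sq_sqrt (by positivity : (0:ℝ) ≤ q ^ 2 + h ^ 2),
      Real.sqrt_nonneg (q ^ 2 + h ^ 2)]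
  -- from regularity: d ≤ κ * h
  have hdkh : d ≤ κ * h := by
    have hxA0 : Metric.infDist x A = 0 := Metric.infDist_zero_of_mem hxA
    have hxB : Metric.infDist x B ≤ h := by
      have := Metric.infDist_le_dist_of_mem (x := x) hyB
      rwa [dist_eq_norm] at this
    have hmax : max (Metric.infDist x A) (Metric.infDist x B) ≤ h := by
      rw [hxA0]; exact max_le hh0 hxB
    calc d ≤ κ * max (Metric.infDist x A) (Metric.infDist x B) := hreg x hxball
      _ ≤ κ * h := by nlinarith [hκ.le]
  have hq2le : q ^ 2 ≤ (1 - (1 / κ) ^ 2) * d ^ 2 := by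
    have hhd : d ^ 2 / κ ^ 2 ≤ h ^ 2 := by
      rw [div_le_iff₀ (by positivity)]
      nlinarith
    have heq : (1 - (1 / κ) ^ 2) * d ^ 2 = d ^ 2 - d ^ 2 / κ ^ 2 := by
      field_simp
    rw [heq]
    linarith
  by_cases hfac : 0 ≤ 1 - (1 / κ) ^ 2
  · calc q = Real.sqrt (q ^ 2) := (Real.sqrt_sq hq0).symm
      _ ≤ Real.sqrt ((1 - (1 / κ) ^ 2) * d ^ 2) := Real.sqrt_le_sqrt hq2le
      _ = Real.sqrt (1 - (1 / κ) ^ 2) * d := by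
          rw [Real.sqrt_mul hfac, Real.sqrt_sq hd0]
  · push_neg at hfac
    rw [Real.sqrt_eq_zero_of_nonpos hfac.le, zero_mul]
    nlinarith [sq_nonneg d]
end
end

section
/- Let A, B be nonempty closed convex subsets of E with {A,B} locally linearly regular at x̂ ∈ S = A∩B on B_δ(x̂) with constant κ, and set γ = 1/κ. For x₀ ∈ B_δ(x̂) ∩ A, define x_{2n+1} = P_B x_{2n} and x_{2n+2} = P_A x_{2n+1}. Then dist(x_{2n+2}, S) ≤ (1 − γ²) dist(x_{2n}, S) for all n ≥ 0. -/
open RealInnerProductSpace Metric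

noncomputable section

variable {E : Type*} [NormedAddCommGroup E] [InnerProductSpace ℝ E]

/-- Variational inequality for a metric projection onto a convex set. -/
lemma aux_proj_inner_nonpos {K : Set E} (hK : Convex ℝ K) {u p : E} (hp : p ∈ K)
    (hmin : ∀ y ∈ K, ‖u - p‖ ≤ ‖u - y‖) : ∀ y ∈ K, ⟪u - p, y - p⟫ ≤ 0 := by
  intro y hy
  by_contra h
  push_neg at h
  set a : ℝ := ⟪u - p, y - p⟫ with ha
  set c : ℝ := ‖y - p‖ ^ 2 with hc
  have hc0 : 0 ≤ c := sq_nonneg _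
  set t : ℝ := min 1 (a / (c + 1)) with ht
  have ht0 : 0 < t := lt_min one_pos (div_pos h (by linarith))
  have ht1 : t ≤ 1 := min_le_left _ _
  have htc : t ≤ a / (c + 1) := min_le_right _ _
  have hz : p + t • (y - p) ∈ K := by
    have := hK hp hy (by linarith : (0:ℝ) ≤ 1 - t) ht0.le (by ring)
    convert this using 1
    module
  have hkey := hmin _ hz
  have hexp : ‖u - (p + t • (y - p))‖ ^ 2
      = ‖u - p‖ ^ 2 - 2 * t * a + t ^ 2 * c := by
    have : u - (p + t • (y - p)) = (u - p) + (-t) • (y - p) := by module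
    rw [this, norm_add_sq_real, real_inner_smul_right, norm_smul]
    simp [mul_pow]
    ring
  have hsq : ‖u - p‖ ^ 2 ≤ ‖u - (p + t • (y - p))‖ ^ 2 := by
    have h1 : (0:ℝ) ≤ ‖u - p‖ := norm_nonneg _
    have h2 : (0:ℝ) ≤ ‖u - (p + t • (y - p))‖ := norm_nonneg _
    nlinarith
  rw [hexp] at hsq
  have h2ta : 2 * a ≤ t * c := by nlinarith
  have : t * c ≤ (a / (c + 1)) * c := mul_le_mul_of_nonneg_right htc hc0
  have hfrac : (a / (c + 1)) * c < 2 * a := by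
    rw [div_mul_eq_mul_div, div_lt_iff₀ (by linarith)]
    nlinarith
  linarith

/-- Pythagoras / firm nonexpansiveness consequence. -/
lemma aux_pythagoras {K : Set E} (hK : Convex ℝ K) {u p : E} (hp : p ∈ K)
    (hmin : ∀ y ∈ K, ‖u - p‖ ≤ ‖u - y‖) {s : E} (hs : s ∈ K) :
    ‖p - s‖ ^ 2 + ‖u - p‖ ^ 2 ≤ ‖u - s‖ ^ 2 := by
  have hvar := aux_proj_inner_nonpos hK hp hmin s hs
  have hdecomp : u - s = (u - p) + (p - s) := by module
  have : ⟪u - p, p - s⟫ = - ⟪u - p, s - p⟫ := by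
    rw [← inner_neg_right]; congr 1; module
  rw [hdecomp, norm_add_sq_real, this]
  linarith

/-- Fejér monotonicity of a convex projection. -/
lemma aux_fejer {K : Set E} (hK : Convex ℝ K) {P : E → E}
    (hP : ∀ z : E, P z ∈ K ∧ ∀ y ∈ K, ‖z - P z‖ ≤ ‖z - y‖) {s : E} (hs : s ∈ K) (z : E) :
    ‖P z - s‖ ≤ ‖z - s‖ := by
  have h := aux_pythagoras hK (hP z).1 (hP z).2 hs
  nlinarith [norm_nonneg (P z - s), norm_nonneg (z - s), sq_nonneg (‖z - P z‖)]

/-- One projection step contracts the squared distance to `S`. -/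
lemma aux_step {C S : Set E} (hC : Convex ℝ C) (hSne : S.Nonempty) (hSC : S ⊆ C)
    {P : E → E} (hP : ∀ z : E, P z ∈ C ∧ ∀ y ∈ C, ‖z - P z‖ ≤ ‖z - y‖)
    {u : E} {κ : ℝ} (hκ : 0 < κ)
    (hregu : infDist u S ≤ κ * infDist u C) :
    infDist (P u) S ^ 2 ≤ (1 - (1 / κ) ^ 2) * infDist u S ^ 2 := by
  set d : ℝ := infDist u S with hd
  have hd0 : 0 ≤ d := infDist_nonneg
  have hgd : (1 / κ) * d ≤ ‖u - P u‖ := by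
    have h1 : infDist u C ≤ ‖u - P u‖ := by
      have := infDist_le_dist_of_mem (x := u) (hP u).1
      rwa [dist_eq_norm] at this
    rw [div_mul_eq_mul_div, div_le_iff₀ hκ]
    calc 1 * d = d := one_mul d
      _ ≤ κ * infDist u C := hregu
      _ ≤ ‖u - P u‖ * κ := by rw [mul_comm]; exact mul_le_mul_of_nonneg_right h1 hκ.le
  have hgd0 : 0 ≤ (1 / κ) * d := mul_nonneg (by positivity) hd0
  have key : infDist (P u) S ^ 2 ≤ d ^ 2 - ((1 / κ) * d) ^ 2 := by
    apply le_of_forall_pos_le_add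
    intro ε hε
    set η : ℝ := min 1 (ε / (2 * d + 1)) with hη
    have hη0 : 0 < η := lt_min one_pos (div_pos hε (by linarith))
    have hη1 : η ≤ 1 := min_le_left _ _
    have hηε : η ≤ ε / (2 * d + 1) := min_le_right _ _
    obtain ⟨s, hsS, hus⟩ := (infDist_lt_iff hSne).1 (show infDist u S < d + η by linarith)
    rw [dist_eq_norm] at hus
    have hpy := aux_pythagoras hC (hP u).1 (hP u).2 (hSC hsS)
    have hPle : infDist (P u) S ≤ ‖P u - s‖ := by
      have := infDist_le_dist_of_mem (x := P u) hsS
      rwa [dist_eq_norm] at this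
    have h1 : infDist (P u) S ^ 2 ≤ ‖P u - s‖ ^ 2 := by
      have h0 : (0:ℝ) ≤ infDist (P u) S := infDist_nonneg
      nlinarith
    have h2 : ‖u - s‖ ^ 2 ≤ (d + η) ^ 2 := by nlinarith [norm_nonneg (u - s)]
    have h3 : ((1 / κ) * d) ^ 2 ≤ ‖u - P u‖ ^ 2 := by nlinarith
    have h4 : (d + η) ^ 2 ≤ d ^ 2 + ε := by
      have : η * (2 * d + 1) ≤ ε := by
        rw [← div_mul_cancel₀ ε (show (2:ℝ) * d + 1 ≠ 0 by linarith)]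
        exact mul_le_mul_of_nonneg_right hηε (by linarith)
      nlinarith
    nlinarith
  have : d ^ 2 - ((1 / κ) * d) ^ 2 = (1 - (1 / κ) ^ 2) * d ^ 2 := by ring
  linarith [key, this.le]

/-- Linear convergence of the method of alternating projections for convex sets under
local linear regularity. -/
theorem MAP_linear_convergence_convex
    (A B : Set E) (hA : A.Nonempty) (hB : B.Nonempty)
    (hAc : IsClosed A) (hBc : IsClosed B)
    (hAconv : Convex ℝ A) (hBconv : Convex ℝ B)
    (xhat : E) (hxhat : xhat ∈ A ∩ B) (δ κ : ℝ) (hδ : 0 < δ) (hκ : 0 < κ)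
    (hreg : ∀ x ∈ Metric.closedBall xhat δ,
        Metric.infDist x (A ∩ B) ≤ κ * max (Metric.infDist x A) (Metric.infDist x B))
    (PA PB : E → E)
    (hPA : ∀ x : E, PA x ∈ A ∧ ∀ y ∈ A, ‖x - PA x‖ ≤ ‖x - y‖)
    (hPB : ∀ x : E, PB x ∈ B ∧ ∀ y ∈ B, ‖x - PB x‖ ≤ ‖x - y‖)
    (x : ℕ → E) (hx0 : x 0 ∈ Metric.closedBall xhat δ ∩ A)
    (hodd : ∀ n : ℕ, x (2 * n + 1) = PB (x (2 * n)))
    (heven : ∀ n : ℕ, x (2 * n + 2) = PA (x (2 * n + 1))) :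
    ∀ n : ℕ,
      Metric.infDist (x (2 * n + 2)) (A ∩ B)
        ≤ (1 - (1 / κ) ^ 2) * Metric.infDist (x (2 * n)) (A ∩ B) := by
  
  set S : Set E := A ∩ B with hS
  have hSne : S.Nonempty := ⟨xhat, hxhat⟩
  have hSA : S ⊆ A := Set.inter_subset_left
  have hSB : S ⊆ B := Set.inter_subset_right
  -- iterates stay in the ball
  have hball0 : ∀ n : ℕ, x (2 * n) ∈ Metric.closedBall xhat δ := by
    intro n
    induction n with
    | zero => exact hx0.1
    | succ k ih =>
      have h1 : ‖x (2 * k + 1) - xhat‖ ≤ ‖x (2 * k) - xhat‖ := by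
        rw [hodd k]; exact aux_fejer hBconv hPB hxhat.2 _
      have h2 : ‖x (2 * k + 2) - xhat‖ ≤ ‖x (2 * k + 1) - xhat‖ := by
        rw [heven k]; exact aux_fejer hAconv hPA hxhat.1 _
      have : (2 * (k + 1)) = 2 * k + 2 := by ring
      rw [this, Metric.mem_closedBall, dist_eq_norm]
      have := Metric.mem_closedBall.1 ih
      rw [dist_eq_norm] at this
      linarith
  have hball1 : ∀ n : ℕ, x (2 * n + 1) ∈ Metric.closedBall xhat δ := by
    intro n
    have h1 : ‖x (2 * n + 1) - xhat‖ ≤ ‖x (2 * n) - xhat‖ := by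
      rw [hodd n]; exact aux_fejer hBconv hPB hxhat.2 _
    rw [Metric.mem_closedBall, dist_eq_norm]
    have := Metric.mem_closedBall.1 (hball0 n)
    rw [dist_eq_norm] at this
    linarith
  have hmemA : ∀ n : ℕ, x (2 * n) ∈ A := by
    intro n
    cases n with
    | zero => exact hx0.2
    | succ k =>
      have : (2 * (k + 1)) = 2 * k + 2 := by ring
      rw [this, heven k]; exact (hPA _).1
  have hmemB : ∀ n : ℕ, x (2 * n + 1) ∈ B := by
    intro n; rw [hodd n]; exact (hPB _).1
  intro n
  rcases le_or_gt 1 κ with hκ1 | hκ1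
  · -- main case κ ≥ 1
    have hγ : (0:ℝ) ≤ 1 - (1 / κ) ^ 2 := by
      have h1 : (1:ℝ) / κ ≤ 1 := by rw [div_le_one hκ]; exact hκ1
      have h2 : (0:ℝ) ≤ 1 / κ := by positivity
      nlinarith
    -- regularity at x(2n): it's in A so max = dist to B
    have hreg1 : infDist (x (2 * n)) S ≤ κ * infDist (x (2 * n)) B := by
      have h := hreg _ (hball0 n)
      rwa [infDist_zero_of_mem (hmemA n), max_eq_right infDist_nonneg] at h
    have hstep1 : infDist (x (2 * n + 1)) S ^ 2
        ≤ (1 - (1 / κ) ^ 2) * infDist (x (2 * n)) S ^ 2 := by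
      rw [hodd n]
      exact aux_step hBconv hSne hSB hPB hκ hreg1
    have hreg2 : infDist (x (2 * n + 1)) S ≤ κ * infDist (x (2 * n + 1)) A := by
      have h := hreg _ (hball1 n)
      rwa [infDist_zero_of_mem (hmemB n), max_eq_left infDist_nonneg] at h
    have hstep2 : infDist (x (2 * n + 2)) S ^ 2
        ≤ (1 - (1 / κ) ^ 2) * infDist (x (2 * n + 1)) S ^ 2 := by
      rw [heven n]
      exact aux_step hAconv hSne hSA hPA hκ hreg2
    set a : ℝ := infDist (x (2 * n + 2)) S
    set d : ℝ := infDist (x (2 * n)) S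
    have hd0 : (0:ℝ) ≤ d := infDist_nonneg
    have ha0 : (0:ℝ) ≤ a := infDist_nonneg
    have hchain : a ^ 2 ≤ ((1 - (1 / κ) ^ 2) * d) ^ 2 := by
      have := mul_le_mul_of_nonneg_left hstep1 hγ
      nlinarith
    have hb0 : (0:ℝ) ≤ (1 - (1 / κ) ^ 2) * d := mul_nonneg hγ hd0
    calc a = Real.sqrt (a ^ 2) := (Real.sqrt_sq ha0).symm
      _ ≤ Real.sqrt (((1 - (1 / κ) ^ 2) * d) ^ 2) := Real.sqrt_le_sqrt hchain
      _ = (1 - (1 / κ) ^ 2) * d := Real.sqrt_sq hb0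
  · -- degenerate case κ < 1 : everything in the ball has distance 0 to S
    have hzero : ∀ z ∈ Metric.closedBall xhat δ, infDist z S = 0 := by
      intro z hz
      have h1 := hreg z hz
      have h2 : infDist z A ≤ infDist z S := infDist_le_infDist_of_subset hSA hSne
      have h3 : infDist z B ≤ infDist z S := infDist_le_infDist_of_subset hSB hSne
      have h4 : max (infDist z A) (infDist z B) ≤ infDist z S := max_le h2 h3
      have h5 : (0:ℝ) ≤ infDist z S := infDist_nonneg
      nlinarith [mul_le_mul_of_nonneg_left h4 hκ.le]
    have hb2 : x (2 * n + 2) ∈ Metric.closedBall xhat δ := by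
      have : (2 * (n + 1)) = 2 * n + 2 := by ring
      rw [← this]; exact hball0 (n + 1)
    rw [hzero _ hb2, hzero _ (hball0 n), mul_zero]
end
end

section
/- Let A, B be closed subsets of E with B a linear subspace, and suppose {A,B} is locally linearly regular at x̂ ∈ S = A∩B on B_δ(x̂) with constant κ > 0. Suppose there is c ∈ (0,1) such that whenever x ∈ B_δ(x̂), y = P_B x, z ∈ P_A(2y − x), u is a proximal normal to A at z with ‖u‖ ≤ 1, and v ∈ B^⊥ with ‖v‖ ≤ 1, one has ⟨u, v⟩ ≥ −c. Then for all x ∈ B_δ(x̂) with P_A R_B x ⊂ B_δ(x̂) and all x₊ ∈ T_DR x: ‖x − x₊‖ ≥ (√(1−c)/κ) dist(x, S). -/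
open RealInnerProductSpace Metric

noncomputable section

variable {E : Type*} [NormedAddCommGroup E] [InnerProductSpace ℝ E]

private lemma pyth {p q : E} (h : ⟪p, q⟫ = 0) : ‖p + q‖ ^ 2 = ‖p‖ ^ 2 + ‖q‖ ^ 2 := by
  rw [@norm_add_sq_real, h]; ring

/-- Coercivity of the Douglas–Rachford operator when one set is a subspace. -/
theorem TDR_coercive_subspace
    (A : Set E) (hA : A.Nonempty) (hAc : IsClosed A)
    (B : Submodule ℝ E)
    (PB : E → E)
    (hPB : ∀ x : E, PB x ∈ B ∧ ∀ y ∈ (B : Set E), ‖x - PB x‖ ≤ ‖x - y‖)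
    (xhat : E) (hxhat : xhat ∈ A ∩ (B : Set E)) (δ κ c : ℝ)
    (hδ : 0 < δ) (hκ : 0 < κ) (hc0 : 0 < c) (hc1 : c < 1)
    (hreg : ∀ w ∈ Metric.closedBall xhat δ,
        Metric.infDist w (A ∩ (B : Set E))
          ≤ κ * max (Metric.infDist w A) (Metric.infDist w (B : Set E)))
    (hang : ∀ x ∈ Metric.closedBall xhat δ,
        ∀ z ∈ projSet A ((2 : ℝ) • PB x - x),
          ∀ u ∈ pnCone A z, ‖u‖ ≤ 1 → ∀ v ∈ Bᗮ, ‖v‖ ≤ 1 → ⟪u, v⟫ ≥ -c) :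
    ∀ x ∈ Metric.closedBall xhat δ,
      projSet A ((2 : ℝ) • PB x - x) ⊆ Metric.closedBall xhat δ →
      ∀ z ∈ projSet A ((2 : ℝ) • PB x - x),
        ‖x - (z - PB x + x)‖
          ≥ (Real.sqrt (1 - c) / κ) * Metric.infDist x (A ∩ (B : Set E)) := by
  intro x hx _ z hz
  obtain ⟨hyB, hymin⟩ := hPB x
  set y := PB x with hy
  set w := (2 : ℝ) • y - x with hw
  -- orthogonality of x - y to B
  have hiInf : ‖x - y‖ = ⨅ v : (B : Set E), ‖x - v‖ := by
    refine le_antisymm (le_ciInf fun v => hymin v v.2) ?_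
    have hbdd : BddBelow (Set.range fun v : (B : Set E) => ‖x - (v : E)‖) :=
      ⟨0, by rintro r ⟨v, rfl⟩; exact norm_nonneg _⟩
    exact ciInf_le hbdd ⟨y, hyB⟩
  have hperp : ∀ b ∈ B, ⟪x - y, b⟫ = 0 :=
    (Submodule.norm_eq_iInf_iff_real_inner_eq_zero B hyB).1 hiInf
  have hxyBo : x - y ∈ Bᗮ := (Submodule.mem_orthogonal' B _).2 hperp
  -- reflection preserves distances to points of B
  have hsqe : ∀ s ∈ B, ‖w - s‖ = ‖x - s‖ := by
    intro s hs
    have h1 : ⟪x - y, y - s⟫ = 0 := hperp _ (Submodule.sub_mem B hyB hs)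
    have h2 : ⟪y - x, y - s⟫ = 0 := by
      have hyx : y - x = -(x - y) := by abel
      rw [hyx, inner_neg_left, h1, neg_zero]
    have e1 : w - s = (y - x) + (y - s) := by rw [hw]; module
    have e2 : x - s = (x - y) + (y - s) := by abel
    have q1 : ‖w - s‖ ^ 2 = ‖y - x‖ ^ 2 + ‖y - s‖ ^ 2 := by rw [e1]; exact pyth h2
    have q2 : ‖x - s‖ ^ 2 = ‖x - y‖ ^ 2 + ‖y - s‖ ^ 2 := by rw [e2]; exact pyth h1
    have hqq : ‖w - s‖ ^ 2 = ‖x - s‖ ^ 2 := by rw [q1, q2, norm_sub_rev y x]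
    calc ‖w - s‖ = Real.sqrt (‖w - s‖ ^ 2) := (Real.sqrt_sq (norm_nonneg _)).symm
      _ = Real.sqrt (‖x - s‖ ^ 2) := by rw [hqq]
      _ = ‖x - s‖ := Real.sqrt_sq (norm_nonneg _)
  have hwball : w ∈ Metric.closedBall xhat δ := by
    rw [Metric.mem_closedBall, dist_eq_norm, hsqe xhat hxhat.2, ← dist_eq_norm]
    exact hx
  set S : Set E := A ∩ (B : Set E) with hS
  have hSne : S.Nonempty := ⟨xhat, hxhat⟩
  have hdistS : Metric.infDist x S = Metric.infDist w S := by
    rw [Metric.infDist_eq_iInf, Metric.infDist_eq_iInf]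
    refine iInf_congr fun s => ?_
    rw [dist_eq_norm, dist_eq_norm, hsqe s s.2.2]
  set a := ‖w - z‖ with ha
  set b := ‖x - y‖ with hb
  have hzA : z ∈ A := hz.1
  have hzd : a = Metric.infDist w A := hz.2
  have hwy : w - y = y - x := by rw [hw]; module
  have hbB : Metric.infDist w (B : Set E) ≤ b := by
    have := Metric.infDist_le_dist_of_mem (x := w) hyB
    rwa [dist_eq_norm, hwy, norm_sub_rev] at this
  have hregS : Metric.infDist x S ≤ κ * max a b := by
    rw [hdistS]
    refine le_trans (hreg w hwball) ?_
    refine mul_le_mul_of_nonneg_left (max_le_max hzd.symm.le hbB) hκ.le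
  -- the angle estimate
  have hinner : ⟪w - z, x - y⟫ ≥ -(c * a * b) := by
    rcases eq_or_ne a 0 with h0 | hane
    · have hwz : w - z = 0 := by rw [← norm_eq_zero, ← ha]; exact h0
      rw [hwz, inner_zero_left, h0]
      norm_num
    rcases eq_or_ne b 0 with h0 | hbne
    · have hxy : x - y = 0 := by rw [← norm_eq_zero, ← hb]; exact h0
      rw [hxy, inner_zero_right, h0]
      norm_num
    have hapos : 0 < a := lt_of_le_of_ne (ha ▸ norm_nonneg _) (Ne.symm hane)
    have hbpos : 0 < b := lt_of_le_of_ne (hb ▸ norm_nonneg _) (Ne.symm hbne)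
    have hu : a⁻¹ • (w - z) ∈ pnCone A z :=
      ⟨a⁻¹, inv_nonneg.2 hapos.le, w, hz, by rw [ha]⟩
    have hun : ‖a⁻¹ • (w - z)‖ ≤ 1 := by
      rw [norm_smul, Real.norm_eq_abs, abs_inv, abs_of_pos hapos, ← ha,
        inv_mul_cancel₀ hane]
    have hv : b⁻¹ • (x - y) ∈ Bᗮ := Submodule.smul_mem _ _ hxyBo
    have hvn : ‖b⁻¹ • (x - y)‖ ≤ 1 := by
      rw [norm_smul, Real.norm_eq_abs, abs_inv, abs_of_pos hbpos, ← hb,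
        inv_mul_cancel₀ hbne]
    have h := hang x hx z hz _ hu hun _ hv hvn
    rw [real_inner_smul_left, real_inner_smul_right] at h
    have h2 := mul_le_mul_of_nonneg_left h (le_of_lt (mul_pos hapos hbpos))
    calc -(c * a * b) = a * b * (-c) := by ring
      _ ≤ a * b * (a⁻¹ * (b⁻¹ * ⟪w - z, x - y⟫)) := h2
      _ = ⟪w - z, x - y⟫ := by field_simp
  -- the norm lower bound
  have hid : x - (z - y + x) = (x - y) + (w - z) := by rw [hw]; module
  have hsq2 : ‖x - (z - y + x)‖ ^ 2 = b ^ 2 + 2 * ⟪x - y, w - z⟫ + a ^ 2 := by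
    rw [hid, norm_add_sq_real, ← ha, ← hb]
  have hcomm : ⟪x - y, w - z⟫ = ⟪w - z, x - y⟫ := real_inner_comm _ _
  have hM2 : (1 - c) * (max a b) ^ 2 ≤ ‖x - (z - y + x)‖ ^ 2 := by
    have hmax : (max a b) ^ 2 ≤ a ^ 2 + b ^ 2 := by
      rcases max_cases a b with ⟨h, _⟩ | ⟨h, _⟩ <;> rw [h] <;>
        nlinarith [ha ▸ norm_nonneg (w - z), hb ▸ norm_nonneg (x - y)]
    nlinarith [sq_nonneg (a - b), hinner, hcomm ▸ hinner]
  have hM : Real.sqrt (1 - c) * max a b ≤ ‖x - (z - y + x)‖ := by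
    have h0 : (0 : ℝ) ≤ max a b := le_max_of_le_left (ha ▸ norm_nonneg _)
    have hs := Real.sqrt_le_sqrt hM2
    rwa [Real.sqrt_mul (by linarith : (0:ℝ) ≤ 1 - c), Real.sqrt_sq h0,
      Real.sqrt_sq (norm_nonneg _)] at hs
  calc Real.sqrt (1 - c) / κ * Metric.infDist x S
      ≤ Real.sqrt (1 - c) / κ * (κ * max a b) :=
        mul_le_mul_of_nonneg_left hregS (div_nonneg (Real.sqrt_nonneg _) hκ.le)
    _ = Real.sqrt (1 - c) * max a b := by field_simp
    _ ≤ ‖x - (z - y + x)‖ := hM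
end
end

section
/- Let A, B be linear subspaces of a Euclidean space E. The Douglas–Rachford iteration x_{n+1} = T_DR x_n, T_DR = ½(R_A R_B + Id), converges with a linear rate to A ∩ B from every starting point x₀ ∈ E if and only if A^⊥ ∩ B^⊥ = {0}. -/
open RealInnerProductSpace Metric

noncomputable section

variable {E : Type*} [NormedAddCommGroup E] [InnerProductSpace ℝ E]

private lemma proj_unique (K : Submodule ℝ E) [K.HasOrthogonalProjection] {P : E → E}
    (hP : ∀ x, P x ∈ K ∧ ∀ y ∈ (K : Set E), ‖x - P x‖ ≤ ‖x - y‖) (x : E) :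
    P x = (Submodule.orthogonalProjectionOnto K x : E) := by
  have hmin : ‖x - P x‖ = ⨅ w : K, ‖x - w‖ := by
    apply le_antisymm
    · exact le_ciInf fun w => (hP x).2 w w.2
    · calc (⨅ w : K, ‖x - w‖) ≤ ‖x - (⟨P x, (hP x).1⟩ : K)‖ :=
            ciInf_le ⟨0, by rintro b ⟨y, rfl⟩; exact norm_nonneg _⟩ _
        _ = ‖x - P x‖ := rfl
  have := (Submodule.norm_eq_iInf_iff_real_inner_eq_zero K (hP x).1).1 hmin
  exact (Submodule.eq_starProjection_of_mem_of_inner_eq_zero (hP x).1 this).symm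

private lemma norm_eq_of_sq (a b : E) (h : ‖a‖ ^ 2 = ‖b‖ ^ 2) : ‖a‖ = ‖b‖ := by
  nlinarith [norm_nonneg a, norm_nonneg b]

/-- Reflection across a subspace is an isometry. -/
private lemma refl_norm (K : Submodule ℝ E) [K.HasOrthogonalProjection] (x : E) :
    ‖(2 : ℝ) • (Submodule.orthogonalProjectionOnto K x : E) - x‖ = ‖x‖ := by
  set p := (Submodule.orthogonalProjectionOnto K x : E)
  have hinner : ⟪x - p, p⟫ = 0 := by
    have := Submodule.sub_starProjection_mem_orthogonal (K := K) x
    have h := this p (Submodule.orthogonalProjectionOnto K x).2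
    rw [real_inner_comm] at h; exact h
  apply norm_eq_of_sq
  have h1 : ‖(2 : ℝ) • p - x‖ ^ 2 = ‖(2 : ℝ) • p‖ ^ 2 - 2 * ⟪(2:ℝ) • p, x⟫ + ‖x‖ ^ 2 :=
    norm_sub_sq_real _ _
  have h2 : ⟪x, p⟫ = ⟪p, p⟫ := by
    have := hinner
    rw [inner_sub_left] at this; linarith
  have h3 : ⟪p, p⟫ = ‖p‖ ^ 2 := real_inner_self_eq_norm_sq p
  have h4 : ‖(2:ℝ) • p‖ ^ 2 = 4 * ‖p‖ ^ 2 := by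
    rw [norm_smul]; simp; ring
  have h5 : ⟪(2:ℝ) • p, x⟫ = 2 * ⟪p, x⟫ := real_inner_smul_left _ _ _
  have h6 : ⟪p, x⟫ = ⟪x, p⟫ := real_inner_comm _ _
  rw [h1, h4, h5, h6, h2, h3]; ring

/-- For linear subspaces, the Douglas–Rachford iteration converges linearly to the
intersection from every starting point iff `A^⊥ ∩ B^⊥ = {0}`. -/
theorem DR_subspaces_linear_iff
    [FiniteDimensional ℝ E]
    (A B : Submodule ℝ E)
    (PA PB : E → E)
    (hPA : ∀ x : E, PA x ∈ A ∧ ∀ y ∈ (A : Set E), ‖x - PA x‖ ≤ ‖x - y‖)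
    (hPB : ∀ x : E, PB x ∈ B ∧ ∀ y ∈ (B : Set E), ‖x - PB x‖ ≤ ‖x - y‖)
    (T : E → E)
    (hT : ∀ x : E,
      T x = ((1 : ℝ) / 2) •
        (((2 : ℝ) • PA ((2 : ℝ) • PB x - x) - ((2 : ℝ) • PB x - x)) + x)) :
    (∃ ctil : ℝ, 0 ≤ ctil ∧ ctil < 1 ∧ ∀ x₀ : E, ∀ n : ℕ,
        Metric.infDist (T^[n + 1] x₀) ((A ⊓ B : Submodule ℝ E) : Set E)
          ≤ ctil * Metric.infDist (T^[n] x₀) ((A ⊓ B : Submodule ℝ E) : Set E))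
    ↔ Aᗮ ⊓ Bᗮ = ⊥ := by
  classical
  have hPA' : ∀ x, PA x = (Submodule.orthogonalProjectionOnto A x : E) := proj_unique A hPA
  have hPB' : ∀ x, PB x = (Submodule.orthogonalProjectionOnto B x : E) := proj_unique B hPB
  set S : Set E := ((A ⊓ B : Submodule ℝ E) : Set E) with hS
  have hSne : S.Nonempty := ⟨0, Submodule.zero_mem _⟩
  -- the "rotation" part
  set N : E → E := fun x =>
    (2 : ℝ) • (Submodule.orthogonalProjectionOnto A ((2 : ℝ) • (Submodule.orthogonalProjectionOnto B x : E) - x) : E)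
      - ((2 : ℝ) • (Submodule.orthogonalProjectionOnto B x : E) - x) with hN
  have hT2 : ∀ x, T x = ((1 : ℝ) / 2) • (N x + x) := by
    intro x; rw [hT x, hPA', hPB']
  have hNiso : ∀ x, ‖N x‖ = ‖x‖ := by
    intro x
    calc ‖N x‖ = ‖(2 : ℝ) • (Submodule.orthogonalProjectionOnto B x : E) - x‖ := refl_norm A _
      _ = ‖x‖ := refl_norm B x
  -- fixed points of T contain A ⊓ B
  have hfix : ∀ x ∈ (A ⊓ B : Submodule ℝ E), T x = x := by
    intro x hx
    have hxA : x ∈ A := hx.1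
    have hxB : x ∈ B := hx.2
    have h1 : (Submodule.orthogonalProjectionOnto B x : E) = x :=
      Submodule.eq_starProjection_of_mem_of_inner_eq_zero hxB (by simp)
    have h2 : (Submodule.orthogonalProjectionOnto A x : E) = x :=
      Submodule.eq_starProjection_of_mem_of_inner_eq_zero hxA (by simp)
    rw [hT2, hN]
    simp only [h1]
    have : (2 : ℝ) • x - x = x := by module
    rw [this, h2, this]
    module
  -- nonexpansiveness
  have hle : ∀ x, ‖T x‖ ≤ ‖x‖ := by
    intro x
    rw [hT2, norm_smul]
    calc ‖(1:ℝ)/2‖ * ‖N x + x‖ ≤ ‖(1:ℝ)/2‖ * (‖N x‖ + ‖x‖) := by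
          apply mul_le_mul_of_nonneg_left (norm_add_le _ _) (norm_nonneg _)
      _ = ‖x‖ := by rw [hNiso]; simp [abs_of_nonneg]; ring
  -- strictness: equality forces N x = x
  have hstrict : ∀ x, ‖T x‖ = ‖x‖ → N x = x := by
    intro x hx
    rcases eq_or_ne x 0 with rfl | hx0
    · rw [hN]; simp
    · have h1 : ‖N x + x‖ = 2 * ‖x‖ := by
        rw [hT2, norm_smul] at hx
        have : ‖(1:ℝ)/2‖ = 1/2 := by norm_num
        rw [this] at hx; linarith
      have h2 : ‖N x + x‖ ^ 2 = ‖N x‖ ^ 2 + 2 * ⟪N x, x⟫ + ‖x‖ ^ 2 := norm_add_sq_real _ _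
      have h1' : ‖N x + x‖ ^ 2 = 4 * ‖x‖ ^ 2 := by rw [h1]; ring
      have h3 : ⟪N x, x⟫ = ‖N x‖ * ‖x‖ := by
        rw [hNiso] at h2 ⊢
        have hx2 : ‖x‖ * ‖x‖ = ‖x‖ ^ 2 := (sq ‖x‖).symm
        linarith [h1', h2]
      have h4 := inner_eq_norm_mul_iff_real.mp h3
      rw [hNiso] at h4
      have := smul_right_injective E (norm_ne_zero_iff.mpr hx0) h4
      exact this
  constructor
  · -- forward: linear convergence ⟹ Aᗮ ⊓ Bᗮ = ⊥
    rintro ⟨c, hc0, hc1, hiter⟩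
    rw [Submodule.eq_bot_iff]
    intro x hx
    have hxA : x ∈ Aᗮ := hx.1
    have hxB : x ∈ Bᗮ := hx.2
    have h1 : (Submodule.orthogonalProjectionOnto B x : E) = 0 := by
      rw [Submodule.orthogonalProjectionOnto_apply_of_mem_orthogonal hxB]
      simp
    have h2 : (Submodule.orthogonalProjectionOnto A (-x) : E) = 0 := by
      rw [Submodule.orthogonalProjectionOnto_apply_of_mem_orthogonal (Aᗮ.neg_mem hxA)]
      simp
    have hfx : T x = x := by
      rw [hT2, hN]
      simp only [h1, smul_zero, zero_sub]
      rw [h2]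
      module
    have hit : ∀ n, T^[n] x = x := fun n => Function.iterate_fixed hfx n
    have := hiter x 0
    rw [hit, hit] at this
    have hd0 : Metric.infDist x S = 0 := by
      have hd := Metric.infDist_nonneg (s := S) (x := x)
      nlinarith
    have hxS : x ∈ S := by
      have hcl : IsClosed S := (A ⊓ B).closed_of_finiteDimensional
      rw [← hcl.closure_eq]
      exact (Metric.mem_closure_iff_infDist_zero hSne).mpr hd0
    have hxAB : x ∈ (A ⊓ B : Submodule ℝ E) := hxS
    have : ⟪x, x⟫ = 0 := hxA x hxAB.1
    exact inner_self_eq_zero.mp this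
  · -- backward
    intro hbot
    -- fixed points of N are in A ⊓ B
    have hfix2 : ∀ x, N x = x → x ∈ (A ⊓ B : Submodule ℝ E) := by
      intro x hx
      set b : E := (Submodule.orthogonalProjectionOnto B x : E) with hb
      set a : E := (Submodule.orthogonalProjectionOnto A ((2 : ℝ) • b - x) : E) with ha
      have hx' : (2 : ℝ) • a - ((2 : ℝ) • b - x) = x := hx
      have h2ab : (2 : ℝ) • a = (2 : ℝ) • b := by
        calc (2 : ℝ) • a = ((2 : ℝ) • a - ((2 : ℝ) • b - x)) + (2 : ℝ) • b - x := by module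
          _ = x + (2 : ℝ) • b - x := by rw [hx']
          _ = (2 : ℝ) • b := by module
      have hab : a = b := smul_right_injective E (two_ne_zero) h2ab
      have hbB : b ∈ B := (Submodule.orthogonalProjectionOnto B x).2
      have hbA : b ∈ A := hab ▸ (Submodule.orthogonalProjectionOnto A ((2 : ℝ) • b - x)).2
      have hxbB : x - b ∈ Bᗮ := Submodule.sub_starProjection_mem_orthogonal x
      have hxbA : x - b ∈ Aᗮ := by
        have h : ((2 : ℝ) • b - x) - (Submodule.orthogonalProjectionOnto A ((2 : ℝ) • b - x) : E) ∈ Aᗮ :=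
          Submodule.sub_starProjection_mem_orthogonal (K := A) ((2 : ℝ) • b - x)
        rw [← ha, hab] at h
        have : ((2 : ℝ) • b - x) - b = -(x - b) := by module
        rw [this] at h
        simpa using Aᗮ.neg_mem h
      have : x - b ∈ Aᗮ ⊓ Bᗮ := ⟨hxbA, hxbB⟩
      rw [hbot, Submodule.mem_bot] at this
      have hxb : x = b := by
        have := sub_eq_zero.mp this; exact this
      exact hxb ▸ ⟨hbA, hbB⟩
    -- T is linear (agrees with a linear map)
    set pAL : E →ₗ[ℝ] E := A.subtype ∘ₗ (Submodule.orthogonalProjectionOnto A).toLinearMap with hpAL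
    set pBL : E →ₗ[ℝ] E := B.subtype ∘ₗ (Submodule.orthogonalProjectionOnto B).toLinearMap with hpBL
    set Tl : E →ₗ[ℝ] E :=
      ((1 : ℝ) / 2) • (((2 : ℝ) • (pAL ∘ₗ ((2 : ℝ) • pBL - LinearMap.id))
        - ((2 : ℝ) • pBL - LinearMap.id)) + LinearMap.id) with hTl
    have hTeq : ∀ x, T x = Tl x := by
      intro x
      rw [hT2, hTl]
      simp [hN, hpAL, hpBL, LinearMap.smul_apply, LinearMap.sub_apply, LinearMap.add_apply,
        LinearMap.comp_apply, LinearMap.id_apply, Submodule.coe_subtype]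
    have hTc : Continuous T := by
      have h := Tl.continuous_of_finiteDimensional
      rw [show T = ⇑Tl from funext hTeq]
      exact h
    -- distance to A ⊓ B is the norm of the orthogonal residual
    have hdist : ∀ x : E, Metric.infDist x S = ‖x - (Submodule.orthogonalProjectionOnto (A ⊓ B) x : E)‖ := by
      intro x
      set p : E := (Submodule.orthogonalProjectionOnto (A ⊓ B) x : E) with hp
      have hpS : p ∈ S := (Submodule.orthogonalProjectionOnto (A ⊓ B) x).2
      apply le_antisymm
      · calc Metric.infDist x S ≤ dist x p := Metric.infDist_le_dist_of_mem hpS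
          _ = ‖x - p‖ := dist_eq_norm _ _
      · rw [Metric.infDist_eq_iInf]
        apply le_ciInf
        rintro ⟨y, hy⟩
        have hyAB : y ∈ (A ⊓ B : Submodule ℝ E) := hy
        have hq : x - p ∈ (A ⊓ B)ᗮ := Submodule.sub_starProjection_mem_orthogonal x
        have hpy : p - y ∈ (A ⊓ B : Submodule ℝ E) :=
          Submodule.sub_mem _ (Submodule.orthogonalProjectionOnto (A ⊓ B) x).2 hyAB
        have hin : ⟪x - p, p - y⟫ = 0 := by
          have := hq (p - y) hpy
          rwa [real_inner_comm] at this
        have hxy : x - y = (x - p) + (p - y) := by module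
        have hsq : ‖x - y‖ ^ 2 = ‖x - p‖ ^ 2 + ‖p - y‖ ^ 2 := by
          rw [hxy, norm_add_sq_real, hin]; ring
        have : dist x (⟨y, hy⟩ : S) = ‖x - y‖ := dist_eq_norm _ _
        rw [this]
        nlinarith [norm_nonneg (x - y), norm_nonneg (x - p), norm_nonneg (p - y)]
    -- the one-step contraction
    have step : ∀ c : ℝ, (∀ q ∈ (A ⊓ B)ᗮ, ‖T q‖ ≤ c * ‖q‖) →
        ∀ x : E, Metric.infDist (T x) S ≤ c * Metric.infDist x S := by
      intro c hc x
      set p : E := (Submodule.orthogonalProjectionOnto (A ⊓ B) x : E) with hp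
      have hpAB : p ∈ (A ⊓ B : Submodule ℝ E) := (Submodule.orthogonalProjectionOnto (A ⊓ B) x).2
      have hq : x - p ∈ (A ⊓ B)ᗮ := Submodule.sub_starProjection_mem_orthogonal x
      have hsplit : T x = p + T (x - p) := by
        have hadd : T x = T p + T (x - p) := by
          rw [hTeq, hTeq, hTeq, ← map_add]
          congr 1
          module
        rw [hadd, hfix p hpAB]
      calc Metric.infDist (T x) S ≤ dist (T x) p := Metric.infDist_le_dist_of_mem hpAB
        _ = ‖T (x - p)‖ := by rw [hsplit, dist_eq_norm]; congr 1; module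
        _ ≤ c * ‖x - p‖ := hc _ hq
        _ = c * Metric.infDist x S := by rw [hdist x]
    -- produce the constant
    by_cases hK : (A ⊓ B)ᗮ = ⊥
    · have htop : (A ⊓ B : Submodule ℝ E) = ⊤ := by
        rwa [Submodule.orthogonal_eq_bot_iff] at hK
      refine ⟨1 / 2, by norm_num, by norm_num, ?_⟩
      intro x₀ n
      have h0 : ∀ y : E, Metric.infDist y S = 0 := fun y =>
        Metric.infDist_zero_of_mem (by rw [hS, htop]; trivial)
      rw [h0, h0]
      norm_num
    · obtain ⟨q, hqK, hq0⟩ := (Submodule.ne_bot_iff _).mp hK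
      set Sph : Set E := (((A ⊓ B)ᗮ : Submodule ℝ E) : Set E) ∩ Metric.sphere 0 1 with hSph
      have hqn : ‖q‖ ≠ 0 := norm_ne_zero_iff.mpr hq0
      have hSphne : Sph.Nonempty := by
        refine ⟨‖q‖⁻¹ • q, Submodule.smul_mem _ _ hqK, ?_⟩
        rw [mem_sphere_zero_iff_norm, norm_smul, norm_inv, norm_norm, inv_mul_cancel₀ hqn]
      have hcomp : IsCompact Sph := by
        have h1 : IsCompact (Metric.sphere (0 : E) 1) := isCompact_sphere 0 1
        exact h1.inter_left ((A ⊓ B)ᗮ.closed_of_finiteDimensional)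
      obtain ⟨q₀, hq₀S, hmax⟩ := hcomp.exists_isMaxOn hSphne (hTc.norm.continuousOn)
      set c : ℝ := ‖T q₀‖ with hc
      have hq₀K : q₀ ∈ (A ⊓ B)ᗮ := hq₀S.1
      have hq₀n : ‖q₀‖ = 1 := mem_sphere_zero_iff_norm.mp hq₀S.2
      have hc0 : 0 ≤ c := norm_nonneg _
      have hc1 : c < 1 := by
        have hle1 : c ≤ 1 := hq₀n ▸ hle q₀
        refine lt_of_le_of_ne hle1 ?_
        intro heq
        have hNq : N q₀ = q₀ := hstrict q₀ (by rw [hc] at heq; rw [heq, hq₀n])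
        have hmem : q₀ ∈ (A ⊓ B : Submodule ℝ E) := hfix2 q₀ hNq
        have : ⟪q₀, q₀⟫ = 0 := by
          have := hq₀K q₀ hmem
          rwa [real_inner_comm] at this
        have : q₀ = 0 := inner_self_eq_zero.mp this
        rw [this] at hq₀n
        simp at hq₀n
      have hcb : ∀ qq ∈ (A ⊓ B)ᗮ, ‖T qq‖ ≤ c * ‖qq‖ := by
        intro qq hqq
        rcases eq_or_ne qq 0 with rfl | h0
        · rw [hTeq]
          simp
        · have hn : (0 : ℝ) < ‖qq‖ := norm_pos_iff.mpr h0
          have hu : ‖qq‖⁻¹ • qq ∈ Sph := by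
            refine ⟨Submodule.smul_mem _ _ hqq, ?_⟩
            rw [mem_sphere_zero_iff_norm, norm_smul, norm_inv, norm_norm,
              inv_mul_cancel₀ hn.ne']
          have hmx : ‖T (‖qq‖⁻¹ • qq)‖ ≤ c := hmax hu
          have hTs : T (‖qq‖⁻¹ • qq) = ‖qq‖⁻¹ • T qq := by
            rw [hTeq, hTeq, map_smul]
          rw [hTs, norm_smul, norm_inv, norm_norm] at hmx
          have := mul_le_mul_of_nonneg_left hmx hn.le
          calc ‖T qq‖ = ‖qq‖ * (‖qq‖⁻¹ * ‖T qq‖) := by field_simp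
            _ ≤ ‖qq‖ * c := this
            _ = c * ‖qq‖ := mul_comm _ _
      refine ⟨c, hc0, hc1, fun x₀ n => ?_⟩
      rw [Function.iterate_succ_apply']
      exact step c hcb _
end
end
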